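/- arXiv:2003.07522 — 2 statements merged into one kernel-verified Lean document; each statement's English description precedes it below -/
import Mathlib

section
/- Let A, A', B, B', C ∈ ℂ^{r×r} with C + nI invertible for all integers n ≥ 0, A, A', B pairwise commuting, B'C = CB', and |x| < 1, |y| < 1; let s be a non-negative integer. (i) If A + kI is invertible for all integers k ≥ 0, then F₃(A+sI, A', B, B'; C; x, y) = F₃(A, A', B, B'; C; x, y) + x·B·[∑_{k=1}^{s} F₃(A+kI, A', B+I, B'; C+I; x, y)]·C⁻¹. (ii) If A' + kI is invertible for all integers k ≥ 0, then F₃(A, A'+sI, B, B'; C; x, y) = F₃(A, A', B, B'; C; x, y) + y·[∑_{k=1}^{s} F₃(A, A'+kI, B, B'+I; C+I; x, y)]·B'·C⁻¹. (iii) If A − kI is invertible for all integers 1 ≤ k ≤ s, then F₃(A−sI, A', B, B'; C; x, y) = F₃(A, A', B, B'; C; x, y) − x·B·[∑_{k=0}^{s−1} F₃(A−kI, A', B+I, B'; C+I; x, y)]·C⁻¹. (iv) If A' − kI is invertible for all integers 1 ≤ k ≤ s, then F₃(A, A'−sI, B, B'; C; x, y) = F₃(A, A', B, B'; C; x, y)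 − y·[∑_{k=0}^{s−1} F₃(A, A'−kI, B, B'+I; C+I; x, y)]·B'·C⁻¹. -/
/-- The shifted factorial (Pochhammer) matrix: `(A)_0 = I`, `(A)_{n+1} = (A)_n (A + nI)`. -/
noncomputable def mPoch {r : ℕ} (A : Matrix (Fin r) (Fin r) ℂ) : ℕ → Matrix (Fin r) (Fin r) ℂ
  | 0 => 1
  | n + 1 => mPoch A n * (A + (n : ℂ) • 1)

/-- The third Appell matrix function `F₃(A, A', B, B'; C; x, y)`. -/
noncomputable def appellF3 {r : ℕ} (A A' B B' C : Matrix (Fin r) (Fin r) ℂ) (x y : ℂ) :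
    Matrix (Fin r) (Fin r) ℂ :=
  ∑' p : ℕ × ℕ,
    (((p.1.factorial : ℂ) * (p.2.factorial : ℂ))⁻¹ * x ^ p.1 * y ^ p.2) •
      (mPoch A p.1 * mPoch A' p.2 * mPoch B p.1 * mPoch B' p.2 * (mPoch C (p.1 + p.2))⁻¹)

namespace AF3

variable {r : ℕ}

local notation "M" => Matrix (Fin r) (Fin r) ℂ

noncomputable def af3T (A A' B B' C : Matrix (Fin r) (Fin r) ℂ) (x y : ℂ) (p : ℕ × ℕ) :
    Matrix (Fin r) (Fin r) ℂ :=
  (((p.1.factorial : ℂ) * (p.2.factorial : ℂ))⁻¹ * x ^ p.1 * y ^ p.2) •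
    (mPoch A p.1 * mPoch A' p.2 * mPoch B p.1 * mPoch B' p.2 * (mPoch C (p.1 + p.2))⁻¹)


lemma appellF3_eq (A A' B B' C : M) (x y : ℂ) :
    appellF3 A A' B B' C x y = ∑' p : ℕ × ℕ, af3T A A' B B' C x y p := rfl






lemma mPoch_zero (A : M) : mPoch A 0 = 1 := rfl

lemma mPoch_succ (A : M) (n : ℕ) : mPoch A (n + 1) = mPoch A n * (A + (n : ℂ) • 1) := rfl

lemma commute_shift (A : M) (a b : ℂ) : Commute (A + a • 1) (A + b • 1) := by
  unfold Commute SemiconjBy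
  simp only [add_mul, mul_add, smul_mul_assoc, mul_smul_comm, one_mul, mul_one, smul_smul,
    smul_add]
  rw [mul_comm b a]
  abel

lemma commute_mPoch {X A : M} (h : Commute X A) (n : ℕ) : Commute X (mPoch A n) := by
  induction n with
  | zero => exact Commute.one_right X
  | succ n ih =>
    rw [mPoch_succ]
    exact ih.mul_right (h.add_right (Commute.smul_right (Commute.one_right X) _))

lemma mPoch_left (A : M) (n : ℕ) : mPoch A (n + 1) = A * mPoch (A + 1) n := by
  induction n with
  | zero => simp [mPoch_succ, mPoch_zero]
  | succ n ih =>
    rw [mPoch_succ, ih, mPoch_succ, mul_assoc]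
    congr 1
    congr 1
    push_cast
    rw [add_smul, one_smul]
    abel

lemma mPoch_right (A : M) (n : ℕ) : mPoch A (n + 1) = mPoch (A + 1) n * A := by
  rw [mPoch_left]
  have h : Commute A (A + 1) := by
    have := commute_shift A 0 1
    simpa using this
  exact (commute_mPoch h n)

lemma mPoch_diff (A : M) (n : ℕ) :
    mPoch (A + 1) (n + 1) - mPoch A (n + 1) = ((n : ℂ) + 1) • mPoch (A + 1) n := by
  have h : A * mPoch (A + 1) n = mPoch (A + 1) n * A :=
    (commute_mPoch (by simpa using commute_shift A 0 1) n).eq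
  rw [mPoch_succ, mPoch_left, h, ← mul_sub]
  have h2 : A + 1 + (n : ℂ) • 1 - A = ((n : ℂ) + 1) • (1 : M) := by
    rw [add_smul, one_smul]; abel
  rw [h2, mul_smul_comm, mul_one]

lemma isUnit_mPoch {C : M} (hC : ∀ n : ℕ, IsUnit (C + (n : ℂ) • (1 : M))) (n : ℕ) :
    IsUnit (mPoch C n) := by
  induction n with
  | zero => exact isUnit_one
  | succ n ih => exact ih.mul (hC n)

lemma mPoch_inv_succ (C : M) (n : ℕ) :
    (mPoch C (n + 1))⁻¹ = (mPoch (C + 1) n)⁻¹ * C⁻¹ := by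
  rw [mPoch_left, Matrix.mul_inv_rev]

lemma commute_inv {X C : M} (h : X * C = C * X) (hC : IsUnit C) : X * C⁻¹ = C⁻¹ * X := by
  have h1 : C * C⁻¹ = 1 := Matrix.mul_nonsing_inv C ((Matrix.isUnit_iff_isUnit_det C).mp hC)
  have h2 : C⁻¹ * C = 1 := Matrix.nonsing_inv_mul C ((Matrix.isUnit_iff_isUnit_det C).mp hC)
  calc X * C⁻¹ = (C⁻¹ * C) * X * C⁻¹ := by rw [h2, one_mul]
    _ = C⁻¹ * (C * X) * C⁻¹ := by rw [mul_assoc C⁻¹ C X]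
    _ = C⁻¹ * (X * C) * C⁻¹ := by rw [h]
    _ = C⁻¹ * X * (C * C⁻¹) := by simp only [mul_assoc]
    _ = C⁻¹ * X := by rw [h1, mul_one]



lemma bern (c : ℕ) (hc : 1 ≤ c) : ∀ u : ℝ, 1 ≤ u → u ^ c * (u + c) ≤ (u + 1) ^ c * u := by
  induction c with
  | zero => omega
  | succ c ih =>
    intro u hu
    rcases Nat.eq_zero_or_pos c with rfl | hc'
    · simp [pow_succ]; nlinarith
    · have h := ih hc' u hu
      have hup : (0 : ℝ) < u := lt_of_lt_of_le one_pos hu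
      have hpow : (0 : ℝ) < u ^ c := pow_pos hup c
      push_cast
      push_cast at h
      calc u ^ (c + 1) * (u + (c + 1))
          = u ^ c * (u + c) * u + u ^ c * u := by ring
        _ ≤ (u + 1) ^ c * u * u + u ^ c * u := by nlinarith
        _ ≤ (u + 1) ^ c * u * u + (u + 1) ^ c * u := by
            have : u ^ c ≤ (u + 1) ^ c := pow_le_pow_left₀ hup.le (by linarith) c
            nlinarith [pow_pos hup c]
        _ = (u + 1) ^ (c + 1) * u := by ring

lemma prod_poly_le (a b : ℝ) (ha : 0 ≤ a) (hb : 0 ≤ b) (c : ℕ) (hc : a + b + a * b + 3 ≤ c) :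
    ∀ m : ℕ, ∏ k ∈ Finset.range m, ((a + k) * (b + k)) ≤ (m + 1 : ℝ) ^ c * (m.factorial : ℝ) ^ 2 := by
  have hc1 : 1 ≤ c := by
    by_contra h
    push_neg at h
    interval_cases c <;> simp at hc <;> nlinarith
  intro m
  induction m with
  | zero => simp
  | succ m ih =>
    rw [Finset.prod_range_succ]
    have h1 : (a + m) * (b + m) ≤ (m + 1 : ℝ) ^ 2 + c * (m + 1) := by
      have hcr : a + b + a * b + 3 ≤ (c : ℝ) := hc
      have hm : (0 : ℝ) ≤ m := Nat.cast_nonneg m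
      nlinarith [mul_nonneg (sub_nonneg.mpr hcr) (by linarith : (0:ℝ) ≤ (m:ℝ) + 1),
        mul_nonneg (mul_nonneg ha hb) hm, mul_nonneg ha hm, mul_nonneg hb hm,
        mul_nonneg ha hb]
    have h2 : ((m + 1 : ℝ)) ^ c * ((m + 1 : ℝ) + c) ≤ ((m + 1 : ℝ) + 1) ^ c * (m + 1 : ℝ) :=
      bern c hc1 (m + 1 : ℝ) (by push_cast; linarith [Nat.cast_nonneg (α := ℝ) m])
    have hfac : ((m + 1).factorial : ℝ) = (m + 1 : ℝ) * (m.factorial : ℝ) := by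
      rw [Nat.factorial_succ]; push_cast; ring
    calc (∏ k ∈ Finset.range m, ((a + k) * (b + k))) * ((a + m) * (b + m))
        ≤ ((m + 1 : ℝ) ^ c * (m.factorial : ℝ) ^ 2) * ((m + 1 : ℝ) ^ 2 + c * (m + 1)) := by
          apply mul_le_mul ih h1 ?_ (by positivity)
          · positivity
      _ = ((m + 1 : ℝ) ^ c * ((m + 1 : ℝ) + c)) * ((m + 1 : ℝ) * (m.factorial : ℝ) ^ 2) := by ring
      _ ≤ (((m + 1 : ℝ)) + 1) ^ c * (m + 1 : ℝ) * ((m + 1 : ℝ) * (m.factorial : ℝ) ^ 2) := by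
          apply mul_le_mul_of_nonneg_right h2 (by positivity)
      _ = ((m + 1 : ℕ) + 1 : ℝ) ^ c * (((m + 1).factorial : ℝ)) ^ 2 := by
          rw [hfac]; push_cast; ring

lemma summable_aux {θ : ℝ} (hθ0 : 0 ≤ θ) (hθ1 : θ < 1) (c : ℕ) :
    Summable (fun m : ℕ => ((m : ℝ) + 1) ^ c * θ ^ m) := by
  have habs : ‖θ‖ < 1 := by rwa [Real.norm_eq_abs, abs_of_nonneg hθ0]
  have : (fun m : ℕ => ((m : ℝ) + 1) ^ c * θ ^ m)
      = fun m : ℕ => ∑ j ∈ Finset.range (c + 1), ((m : ℝ) ^ j * 1 ^ (c - j) * (c.choose j)) * θ ^ m := by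
    funext m
    rw [← Finset.sum_mul, ← add_pow]
  rw [this]
  apply summable_sum
  intro j hj
  have h := summable_pow_mul_geometric_of_norm_lt_one (R := ℝ) j habs
  simpa [mul_comm, mul_assoc, mul_left_comm] using (h.mul_right ((c.choose j) : ℝ))


section Norm


attribute [local instance] Matrix.linftyOpNormedAddCommGroup Matrix.linftyOpNormedRing
  Matrix.linftyOpNormedAlgebra

lemma mPoch_succ' (A : M) (n : ℕ) : mPoch A (n + 1) = mPoch A n * (A + (n : ℂ) • 1) := rfl

lemma norm_mPoch_le [Nonempty (Fin r)] (X : M) (m : ℕ) :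
    ‖mPoch X m‖ ≤ ∏ k ∈ Finset.range m, (‖X‖ + k) := by
  induction m with
  | zero => simp [mPoch]
  | succ m ih =>
    rw [mPoch_succ', Finset.prod_range_succ]
    refine le_trans (norm_mul_le _ _) (mul_le_mul ih ?_ (norm_nonneg _) ?_)
    · refine le_trans (norm_add_le _ _) ?_
      rw [norm_smul, norm_one, Complex.norm_natCast, mul_one]
    · exact Finset.prod_nonneg fun k _ => by positivity

lemma norm_mPoch_inv_le [Nonempty (Fin r)] (C : M) (N : ℕ) :
    ‖(mPoch C N)⁻¹‖ ≤ ∏ k ∈ Finset.range N, ‖(C + (k : ℂ) • 1)⁻¹‖ := by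
  induction N with
  | zero =>
    have : (mPoch C 0)⁻¹ = (1 : M) := by
      rw [show mPoch C 0 = (1 : M) from rfl]
      exact Matrix.inv_eq_right_inv (one_mul 1)
    simp [this]
  | succ N ih =>
    rw [mPoch_succ', Matrix.mul_inv_rev, Finset.prod_range_succ, mul_comm
      (∏ k ∈ Finset.range N, ‖(C + (k : ℂ) • 1)⁻¹‖)]
    exact le_trans (norm_mul_le _ _)
      (mul_le_mul le_rfl ih (norm_nonneg _) (norm_nonneg _))

lemma neumann [Nonempty (Fin r)] (C : M) (k : ℕ) (hk : ‖C‖ < k) :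
    ‖(C + (k : ℂ) • 1)⁻¹‖ ≤ ((k : ℝ) - ‖C‖)⁻¹ := by
  have hk0 : (0 : ℝ) < k := lt_of_le_of_lt (norm_nonneg C) hk
  have hkne : k ≠ 0 := Nat.pos_iff_ne_zero.mp (Nat.cast_pos.mp hk0)
  have hkc : (k : ℂ) ≠ 0 := Nat.cast_ne_zero.mpr hkne
  set T : M := -((k : ℂ)⁻¹ • C) with hTdef
  have hT : ‖T‖ = ‖C‖ / k := by
    rw [hTdef, norm_neg, norm_smul, norm_inv, Complex.norm_natCast, div_eq_inv_mul]
  have hT1 : ‖T‖ < 1 := by rw [hT]; exact (div_lt_one hk0).2 hk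
  have key : (C + (k : ℂ) • 1) * ((k : ℂ)⁻¹ • ∑' n : ℕ, T ^ n) = 1 := by
    have h1 : C + (k : ℂ) • (1 : M) = (k : ℂ) • ((1 : M) - T) := by
      rw [smul_sub, hTdef, smul_neg, smul_smul, mul_inv_cancel₀ hkc, one_smul, sub_neg_eq_add,
        add_comm]
    rw [h1, smul_mul_assoc, mul_smul_comm, smul_smul, mul_inv_cancel₀ hkc, one_smul]
    exact mul_neg_geom_series T hT1
  rw [Matrix.inv_eq_right_inv key, norm_smul, norm_inv, Complex.norm_natCast]
  have hS : ‖∑' n : ℕ, T ^ n‖ ≤ (1 - ‖T‖)⁻¹ := by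
    have := tsum_geometric_le_of_norm_lt_one T hT1
    rwa [norm_one, sub_self, zero_add] at this
  calc (k : ℝ)⁻¹ * ‖∑' n : ℕ, T ^ n‖ ≤ (k : ℝ)⁻¹ * (1 - ‖T‖)⁻¹ := by
        exact mul_le_mul_of_nonneg_left hS (by positivity)
    _ = ((k : ℝ) - ‖C‖)⁻¹ := by
        rw [hT, ← mul_inv, mul_sub, mul_one, mul_div_cancel₀ _ (ne_of_gt hk0)]


set_option maxHeartbeats 1000000 in
lemma af3T_summable (A A' B B' C : M) (x y : ℂ)
    (hC : ∀ n : ℕ, IsUnit (C + (n : ℂ) • (1 : M)))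
    (hx : ‖x‖ < 1) (hy : ‖y‖ < 1) :
    Summable (af3T A A' B B' C x y) := by
  rcases Nat.eq_zero_or_pos r with rfl | hr
  · haveI : Subsingleton (Matrix (Fin 0) (Fin 0) ℂ) :=
      ⟨fun P Q => by ext i j; exact i.elim0⟩
    refine ⟨0, ?_⟩
    have h0 : (fun s : Finset (ℕ × ℕ) => ∑ i ∈ s, af3T A A' B B' C x y i) = fun _ => 0 :=
      funext fun s => Subsingleton.elim _ _
    rw [HasSum, h0]
    exact tendsto_const_nhds
  haveI : Nonempty (Fin r) := Fin.pos_iff_nonempty.mp hr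
  classical
  set t₀ : ℝ := max ‖x‖ ‖y‖ with ht₀def
  have ht₀0 : 0 ≤ t₀ := le_trans (norm_nonneg x) (le_max_left _ _)
  have ht₀1 : t₀ < 1 := max_lt hx hy
  set μ : ℝ := 1 + (1 - t₀) / 4 with hμdef
  have hμ1 : 1 < μ := by rw [hμdef]; linarith
  have hμ0 : 0 < μ := by linarith
  set θ : ℝ := μ * t₀ with hθdef
  have hθ0 : 0 ≤ θ := mul_nonneg hμ0.le ht₀0
  have hθ1 : θ < 1 := by rw [hθdef, hμdef]; nlinarith
  set cf : ℕ → ℝ := fun k => ‖(C + (k : ℂ) • (1 : M))⁻¹‖ with hcfdef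
  have hcf0 : ∀ k, 0 ≤ cf k := fun k => norm_nonneg _
  set K : ℕ := ⌈(1 + μ * ‖C‖) / (μ - 1)⌉₊ + ⌈‖C‖⌉₊ + 1 with hKdef
  have hK : ∀ k : ℕ, K ≤ k → cf k ≤ μ / (k + 1) := by
    intro k hk
    have hkK1 : ⌈‖C‖⌉₊ + 1 ≤ k := by omega
    have hkK2 : ⌈(1 + μ * ‖C‖) / (μ - 1)⌉₊ ≤ k := by omega
    have hck : ‖C‖ < k := by
      have h1 : ‖C‖ ≤ (⌈‖C‖⌉₊ : ℝ) := Nat.le_ceil _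
      have h2 : ((⌈‖C‖⌉₊ : ℕ) : ℝ) + 1 ≤ (k : ℝ) := by exact_mod_cast hkK1
      linarith
    have h2 : (1 + μ * ‖C‖) / (μ - 1) ≤ (k : ℝ) := by
      refine le_trans (Nat.le_ceil _) ?_
      exact_mod_cast hkK2
    have h3 : 1 + μ * ‖C‖ ≤ (μ - 1) * k := by
      rw [div_le_iff₀ (by linarith)] at h2
      linarith
    refine le_trans (neumann C k hck) ?_
    have h4 : (0 : ℝ) < (k : ℝ) - ‖C‖ := by linarith
    rw [← one_div, div_le_div_iff₀ h4 (by positivity)]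
    nlinarith
  set d : ℕ → ℝ := fun k => max (cf k) (μ / (k + 1)) with hddef
  have hd0 : ∀ k, 0 < d k := fun k =>
    lt_of_lt_of_le (by positivity) (le_max_right _ _)
  set D : ℝ := ∏ k ∈ Finset.range K, (d k * (k + 1) / μ) with hDdef
  have hd1 : ∀ k : ℕ, 1 ≤ d k * (k + 1) / μ := by
    intro k
    rw [le_div_iff₀ hμ0, one_mul]
    have h1 : μ / (k + 1) ≤ d k := le_max_right _ _
    have hk1 : (0 : ℝ) < (k : ℝ) + 1 := by positivity
    calc μ = μ / ((k : ℝ) + 1) * ((k : ℝ) + 1) := by field_simp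
      _ ≤ d k * ((k : ℝ) + 1) := mul_le_mul_of_nonneg_right h1 hk1.le
  have hD1 : 1 ≤ D := by
    rw [hDdef]
    calc (1 : ℝ) = ∏ _k ∈ Finset.range K, 1 := Finset.prod_const_one.symm
      _ ≤ _ := Finset.prod_le_prod (fun k _ => zero_le_one) (fun k _ => hd1 k)
  have hD0 : 0 ≤ D := le_trans zero_le_one hD1
  have prodc : ∀ N : ℕ, (∏ k ∈ Finset.range N, cf k) ≤ D * μ ^ N / (N.factorial : ℝ) := by
    intro N
    have hfac : (∏ k ∈ Finset.range N, ((k : ℝ) + 1)) = (N.factorial : ℝ) := by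
      rw [← Finset.prod_range_add_one_eq_factorial]
      push_cast
      rfl
    have step1 : (∏ k ∈ Finset.range N, cf k) ≤ ∏ k ∈ Finset.range N, d k :=
      Finset.prod_le_prod (fun k _ => hcf0 k) (fun k _ => le_max_left _ _)
    have step2 : (∏ k ∈ Finset.range N, d k)
        = (∏ k ∈ Finset.range N, (d k * (k + 1) / μ)) * (μ ^ N / (N.factorial : ℝ)) := by
      have e1 : μ ^ N / (N.factorial : ℝ) = ∏ k ∈ Finset.range N, (μ / ((k : ℝ) + 1)) := by
        rw [Finset.prod_div_distrib, Finset.prod_const, Finset.card_range, hfac]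
      rw [e1, ← Finset.prod_mul_distrib]
      refine Finset.prod_congr rfl fun k _ => ?_
      have hk1 : ((k : ℝ) + 1) ≠ 0 := by positivity
      field_simp
    have step3 : (∏ k ∈ Finset.range N, (d k * (k + 1) / μ)) ≤ D := by
      rcases le_or_gt N K with h | h
      · have hDeq : D = (∏ k ∈ Finset.Ico 0 N, (d k * (k + 1) / μ))
            * ∏ k ∈ Finset.Ico N K, (d k * (k + 1) / μ) := by
          rw [hDdef, Finset.range_eq_Ico, ← Finset.prod_Ico_consecutive _ (Nat.zero_le N) h]
        have h1le : 1 ≤ ∏ k ∈ Finset.Ico N K, (d k * (k + 1) / μ) := by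
          calc (1 : ℝ) = ∏ _k ∈ Finset.Ico N K, 1 := Finset.prod_const_one.symm
            _ ≤ _ := Finset.prod_le_prod (fun k _ => zero_le_one) (fun k _ => hd1 k)
        have hp0 : 0 ≤ ∏ k ∈ Finset.Ico 0 N, (d k * (k + 1) / μ) :=
          Finset.prod_nonneg fun k _ =>
            div_nonneg (mul_nonneg (hd0 k).le (by positivity)) hμ0.le
        rw [hDeq, Finset.range_eq_Ico]
        exact le_mul_of_one_le_right hp0 h1le
      · rw [Finset.range_eq_Ico, ← Finset.prod_Ico_consecutive _ (Nat.zero_le K) h.le]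
        have hone : (∏ k ∈ Finset.Ico K N, (d k * (k + 1) / μ)) = 1 := by
          refine Finset.prod_eq_one fun k hk => ?_
          have hkK : K ≤ k := (Finset.mem_Ico.mp hk).1
          have : d k = μ / ((k : ℝ) + 1) := max_eq_right (hK k hkK)
          rw [this]
          field_simp
        rw [hone, mul_one, ← Finset.range_eq_Ico]
    calc (∏ k ∈ Finset.range N, cf k) ≤ ∏ k ∈ Finset.range N, d k := step1
      _ = (∏ k ∈ Finset.range N, (d k * (k + 1) / μ)) * (μ ^ N / (N.factorial : ℝ)) := step2
      _ ≤ D * (μ ^ N / (N.factorial : ℝ)) :=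
          mul_le_mul_of_nonneg_right step3 (by positivity)
      _ = D * μ ^ N / (N.factorial : ℝ) := by rw [mul_div_assoc]
  set ca : ℕ := ⌈‖A‖ + ‖B‖ + ‖A‖ * ‖B‖ + 3⌉₊ with hcadef
  set cb : ℕ := ⌈‖A'‖ + ‖B'‖ + ‖A'‖ * ‖B'‖ + 3⌉₊ with hcbdef
  have hgsum : Summable (fun p : ℕ × ℕ =>
      (D * (((p.1 : ℝ) + 1) ^ ca * θ ^ p.1)) * (((p.2 : ℝ) + 1) ^ cb * θ ^ p.2)) :=
    Summable.mul_of_nonneg ((summable_aux hθ0 hθ1 ca).mul_left D)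
      (summable_aux hθ0 hθ1 cb) (fun m => by positivity) (fun n => by positivity)
  apply Summable.of_norm_bounded hgsum
  rintro ⟨m, n⟩
  have hxt : ‖x‖ * μ ≤ θ := by
    rw [hθdef, mul_comm]
    exact mul_le_mul_of_nonneg_left (le_max_left _ _) hμ0.le
  have hyt : ‖y‖ * μ ≤ θ := by
    rw [hθdef, mul_comm]
    exact mul_le_mul_of_nonneg_left (le_max_right _ _) hμ0.le
  set PA := ∏ k ∈ Finset.range m, (‖A‖ + (k : ℝ)) with hPA
  set PB := ∏ k ∈ Finset.range m, (‖B‖ + (k : ℝ)) with hPB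
  set PA' := ∏ k ∈ Finset.range n, (‖A'‖ + (k : ℝ)) with hPA'
  set PB' := ∏ k ∈ Finset.range n, (‖B'‖ + (k : ℝ)) with hPB'
  set PC := ∏ k ∈ Finset.range (m + n), cf k with hPC
  have hPA0 : 0 ≤ PA := Finset.prod_nonneg fun k _ => by positivity
  have hPB0 : 0 ≤ PB := Finset.prod_nonneg fun k _ => by positivity
  have hPA'0 : 0 ≤ PA' := Finset.prod_nonneg fun k _ => by positivity
  have hPB'0 : 0 ≤ PB' := Finset.prod_nonneg fun k _ => by positivity
  have hPC0 : 0 ≤ PC := Finset.prod_nonneg fun k _ => hcf0 k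
  have hmul : ∀ (X Y : M) (u v : ℝ), ‖X‖ ≤ u → ‖Y‖ ≤ v → 0 ≤ v → ‖X * Y‖ ≤ u * v := by
    intro X Y u v hX hY hv
    exact le_trans (norm_mul_le _ _)
      (mul_le_mul hX hY (norm_nonneg _) (le_trans (norm_nonneg _) hX))
  have hbig : ‖mPoch A m * mPoch A' n * mPoch B m * mPoch B' n * (mPoch C (m + n))⁻¹‖
      ≤ PA * PA' * PB * PB' * PC := by
    refine hmul _ _ _ _ ?_ (norm_mPoch_inv_le C (m + n)) hPC0
    refine hmul _ _ _ _ ?_ (norm_mPoch_le B' n) hPB'0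
    refine hmul _ _ _ _ ?_ (norm_mPoch_le B m) hPB0
    exact hmul _ _ _ _ (norm_mPoch_le A m) (norm_mPoch_le A' n) hPA'0
  have hcoef : ‖(((m.factorial : ℂ) * (n.factorial : ℂ))⁻¹ * x ^ m * y ^ n)‖
      = ((m.factorial : ℝ) * (n.factorial : ℝ))⁻¹ * ‖x‖ ^ m * ‖y‖ ^ n := by
    rw [norm_mul, norm_mul, norm_inv, norm_mul, norm_pow, norm_pow,
      Complex.norm_natCast, Complex.norm_natCast]
  have hF0 : (0 : ℝ) < (m.factorial : ℝ) := by exact_mod_cast m.factorial_pos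
  have hG0 : (0 : ℝ) < (n.factorial : ℝ) := by exact_mod_cast n.factorial_pos
  have hH0 : (0 : ℝ) < ((m + n).factorial : ℝ) := by exact_mod_cast (m + n).factorial_pos
  have hFG : (m.factorial : ℝ) * (n.factorial : ℝ) ≤ ((m + n).factorial : ℝ) := by
    exact_mod_cast Nat.le_of_dvd (m + n).factorial_pos
      (Nat.factorial_mul_factorial_dvd_factorial_add m n)
  have hABp : PA * PB ≤ ((m : ℝ) + 1) ^ ca * (m.factorial : ℝ) ^ 2 := by
    rw [hPA, hPB, ← Finset.prod_mul_distrib]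
    exact prod_poly_le ‖A‖ ‖B‖ (norm_nonneg _) (norm_nonneg _) ca (Nat.le_ceil _) m
  have hA'B'p : PA' * PB' ≤ ((n : ℝ) + 1) ^ cb * (n.factorial : ℝ) ^ 2 := by
    rw [hPA', hPB', ← Finset.prod_mul_distrib]
    exact prod_poly_le ‖A'‖ ‖B'‖ (norm_nonneg _) (norm_nonneg _) cb (Nat.le_ceil _) n
  have hxpow : ‖x‖ ^ m * μ ^ m ≤ θ ^ m := by
    rw [← mul_pow]; exact pow_le_pow_left₀ (by positivity) hxt m
  have hypow : ‖y‖ ^ n * μ ^ n ≤ θ ^ n := by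
    rw [← mul_pow]; exact pow_le_pow_left₀ (by positivity) hyt n
  show ‖af3T A A' B B' C x y (m, n)‖ ≤ _
  rw [af3T, norm_smul, hcoef]
  refine le_trans (mul_le_mul_of_nonneg_left hbig (by positivity)) ?_
  calc ((m.factorial : ℝ) * (n.factorial : ℝ))⁻¹ * ‖x‖ ^ m * ‖y‖ ^ n
        * (PA * PA' * PB * PB' * PC)
      ≤ ((m.factorial : ℝ) * (n.factorial : ℝ))⁻¹ * ‖x‖ ^ m * ‖y‖ ^ n
        * (PA * PA' * PB * PB' * (D * μ ^ (m + n) / ((m + n).factorial : ℝ))) := by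
        refine mul_le_mul_of_nonneg_left ?_ (by positivity)
        exact mul_le_mul_of_nonneg_left (prodc (m + n))
          (by exact mul_nonneg (mul_nonneg (mul_nonneg hPA0 hPA'0) hPB0) hPB'0)
    _ ≤ ((m.factorial : ℝ) * (n.factorial : ℝ))⁻¹ * ‖x‖ ^ m * ‖y‖ ^ n
        * (PA * PA' * PB * PB' * (D * μ ^ (m + n) / ((m.factorial : ℝ) * (n.factorial : ℝ)))) := by
        refine mul_le_mul_of_nonneg_left ?_ (by positivity)
        refine mul_le_mul_of_nonneg_left ?_
          (mul_nonneg (mul_nonneg (mul_nonneg hPA0 hPA'0) hPB0) hPB'0)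
        exact div_le_div_of_nonneg_left (by positivity) (by positivity) hFG
    _ = D * ((PA * PB) * (‖x‖ ^ m * μ ^ m) / ((m.factorial : ℝ) * (m.factorial : ℝ)))
        * ((PA' * PB') * (‖y‖ ^ n * μ ^ n) / ((n.factorial : ℝ) * (n.factorial : ℝ))) := by
        rw [pow_add]
        field_simp
    _ ≤ D * (((m : ℝ) + 1) ^ ca * (m.factorial : ℝ) ^ 2 * θ ^ m
          / ((m.factorial : ℝ) * (m.factorial : ℝ)))
        * (((n : ℝ) + 1) ^ cb * (n.factorial : ℝ) ^ 2 * θ ^ n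
          / ((n.factorial : ℝ) * (n.factorial : ℝ))) := by
        have h1 : PA * PB * (‖x‖ ^ m * μ ^ m)
            ≤ ((m : ℝ) + 1) ^ ca * (m.factorial : ℝ) ^ 2 * θ ^ m :=
          mul_le_mul hABp hxpow (by positivity) (by positivity)
        have h2 : PA' * PB' * (‖y‖ ^ n * μ ^ n)
            ≤ ((n : ℝ) + 1) ^ cb * (n.factorial : ℝ) ^ 2 * θ ^ n :=
          mul_le_mul hA'B'p hypow (by positivity) (by positivity)
        have h1d : PA * PB * (‖x‖ ^ m * μ ^ m) / ((m.factorial : ℝ) * (m.factorial : ℝ))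
            ≤ ((m : ℝ) + 1) ^ ca * (m.factorial : ℝ) ^ 2 * θ ^ m
              / ((m.factorial : ℝ) * (m.factorial : ℝ)) :=
          by
          apply (div_le_div_iff_of_pos_right (by positivity)).mpr h1
        have h2d : PA' * PB' * (‖y‖ ^ n * μ ^ n) / ((n.factorial : ℝ) * (n.factorial : ℝ))
            ≤ ((n : ℝ) + 1) ^ cb * (n.factorial : ℝ) ^ 2 * θ ^ n
              / ((n.factorial : ℝ) * (n.factorial : ℝ)) :=
          by
          apply (div_le_div_iff_of_pos_right (by positivity)).mpr h2
        refine mul_le_mul (mul_le_mul_of_nonneg_left h1d hD0) h2d ?_ ?_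
        · exact div_nonneg (mul_nonneg (mul_nonneg hPA'0 hPB'0) (by positivity)) (by positivity)
        · exact mul_nonneg hD0 (by positivity)
    _ = (D * (((m : ℝ) + 1) ^ ca * θ ^ m)) * (((n : ℝ) + 1) ^ cb * θ ^ n) := by
        field_simp

lemma hC_shift {C : M} (hC : ∀ n : ℕ, IsUnit (C + (n : ℂ) • (1 : M))) :
    ∀ n : ℕ, IsUnit ((C + 1) + (n : ℂ) • (1 : M)) := by
  intro n
  have h := hC (n + 1)
  have e : C + ((n + 1 : ℕ) : ℂ) • (1 : M) = (C + 1) + (n : ℂ) • (1 : M) := by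
    push_cast
    rw [add_smul, one_smul]
    abel
  rwa [e] at h

lemma contiguous_A (A A' B B' C : M) (x y : ℂ)
    (hC : ∀ n : ℕ, IsUnit (C + (n : ℂ) • (1 : M)))
    (hAB : A * B = B * A) (hA'B : A' * B = B * A')
    (hx : ‖x‖ < 1) (hy : ‖y‖ < 1) :
    appellF3 (A + 1) A' B B' C x y = appellF3 A A' B B' C x y +
      x • (B * appellF3 (A + 1) A' (B + 1) B' (C + 1) x y * C⁻¹) := by
  have hC' := hC_shift hC
  have h1 : Summable (af3T (A + 1) A' B B' C x y) := af3T_summable _ _ _ _ _ _ _ hC hx hy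
  have h0 : Summable (af3T A A' B B' C x y) := af3T_summable _ _ _ _ _ _ _ hC hx hy
  have hg : Summable (af3T (A + 1) A' (B + 1) B' (C + 1) x y) :=
    af3T_summable _ _ _ _ _ _ _ hC' hx hy
  have hBA1 : Commute B (A + 1) := by
    unfold Commute SemiconjBy
    rw [mul_add, add_mul, mul_one, one_mul, ← hAB]
  have hBA' : Commute B A' := hA'B.symm
  have key : ∀ p : ℕ × ℕ,
      af3T (A + 1) A' B B' C x y (p.1 + 1, p.2) - af3T A A' B B' C x y (p.1 + 1, p.2)
      = x • (B * af3T (A + 1) A' (B + 1) B' (C + 1) x y p * C⁻¹) := by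
    rintro ⟨m, n⟩
    show ((((m + 1).factorial : ℂ) * (n.factorial : ℂ))⁻¹ * x ^ (m + 1) * y ^ n) •
        (mPoch (A + 1) (m + 1) * mPoch A' n * mPoch B (m + 1) * mPoch B' n
          * (mPoch C (m + 1 + n))⁻¹)
      - ((((m + 1).factorial : ℂ) * (n.factorial : ℂ))⁻¹ * x ^ (m + 1) * y ^ n) •
        (mPoch A (m + 1) * mPoch A' n * mPoch B (m + 1) * mPoch B' n
          * (mPoch C (m + 1 + n))⁻¹)
      = x • (B * ((((m.factorial : ℂ) * (n.factorial : ℂ))⁻¹ * x ^ m * y ^ n) •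
          (mPoch (A + 1) m * mPoch A' n * mPoch (B + 1) m * mPoch B' n
            * (mPoch (C + 1) (m + n))⁻¹)) * C⁻¹)
    rw [← smul_sub]
    simp only [← sub_mul]
    rw [mPoch_diff A m]
    have emat : mPoch (A + 1) m * mPoch A' n * mPoch B (m + 1) * mPoch B' n
        * (mPoch C (m + 1 + n))⁻¹
        = B * (mPoch (A + 1) m * mPoch A' n * mPoch (B + 1) m * mPoch B' n
          * (mPoch (C + 1) (m + n))⁻¹) * C⁻¹ := by
      have e2 : (mPoch C (m + 1 + n))⁻¹ = (mPoch (C + 1) (m + n))⁻¹ * C⁻¹ := by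
        have hmn : m + 1 + n = (m + n) + 1 := by omega
        rw [hmn, mPoch_inv_succ]
      rw [mPoch_left B m, e2]
      have hWB : mPoch (A + 1) m * mPoch A' n * B = B * (mPoch (A + 1) m * mPoch A' n) :=
        (((commute_mPoch hBA1 m).mul_right (commute_mPoch hBA' n))).eq.symm
      rw [← mul_assoc (mPoch (A + 1) m * mPoch A' n) B (mPoch (B + 1) m), hWB]
      simp only [mul_assoc]
    have escal : (((m + 1).factorial : ℂ) * (n.factorial : ℂ))⁻¹ * x ^ (m + 1) * y ^ n
        * ((m : ℂ) + 1) = x * (((m.factorial : ℂ) * (n.factorial : ℂ))⁻¹ * x ^ m * y ^ n) := by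
      have hfs : ((m + 1).factorial : ℂ) = ((m : ℂ) + 1) * (m.factorial : ℂ) := by
        rw [Nat.factorial_succ]; push_cast; ring
      have h1 : (m.factorial : ℂ) ≠ 0 := Nat.cast_ne_zero.mpr m.factorial_ne_zero
      have h2 : (n.factorial : ℂ) ≠ 0 := Nat.cast_ne_zero.mpr n.factorial_ne_zero
      have h3 : ((m : ℂ) + 1) ≠ 0 := Nat.cast_add_one_ne_zero m
      rw [hfs]
      field_simp
      ring
    simp only [smul_mul_assoc, mul_smul_comm, smul_smul]
    rw [escal, emat]
  have hinj : Function.Injective (fun q : ℕ × ℕ => (q.1 + 1, q.2)) := by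
    rintro ⟨a, b⟩ ⟨c, d⟩ h
    simp only [Prod.mk.injEq] at h
    simp [Prod.ext_iff]
    omega
  have hsupp : Function.support
      (fun p : ℕ × ℕ => af3T (A + 1) A' B B' C x y p - af3T A A' B B' C x y p)
      ⊆ Set.range (fun q : ℕ × ℕ => (q.1 + 1, q.2)) := by
    intro p hp
    rcases p with ⟨m, n⟩
    rcases m with _ | m
    · exfalso
      apply hp
      show (((Nat.factorial 0 : ℂ) * (n.factorial : ℂ))⁻¹ * x ^ 0 * y ^ n) •
          (mPoch (A + 1) 0 * mPoch A' n * mPoch B 0 * mPoch B' n * (mPoch C (0 + n))⁻¹)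
        - (((Nat.factorial 0 : ℂ) * (n.factorial : ℂ))⁻¹ * x ^ 0 * y ^ n) •
          (mPoch A 0 * mPoch A' n * mPoch B 0 * mPoch B' n * (mPoch C (0 + n))⁻¹) = 0
      simp only [mPoch_zero, sub_self]
    · exact ⟨(m, n), rfl⟩
  have hsub : appellF3 (A + 1) A' B B' C x y - appellF3 A A' B B' C x y
      = x • (B * appellF3 (A + 1) A' (B + 1) B' (C + 1) x y * C⁻¹) := by
    rw [appellF3_eq, appellF3_eq, appellF3_eq, ← Summable.tsum_sub h1 h0, ← hinj.tsum_eq hsupp]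
    calc ∑' q : ℕ × ℕ, (af3T (A + 1) A' B B' C x y (q.1 + 1, q.2)
          - af3T A A' B B' C x y (q.1 + 1, q.2))
        = ∑' q : ℕ × ℕ, x • (B * af3T (A + 1) A' (B + 1) B' (C + 1) x y q * C⁻¹) :=
          tsum_congr key
      _ = x • ∑' q : ℕ × ℕ, (B * af3T (A + 1) A' (B + 1) B' (C + 1) x y q * C⁻¹) :=
          Summable.tsum_const_smul x ((hg.mul_left B).mul_right C⁻¹)
      _ = x • ((∑' q : ℕ × ℕ, B * af3T (A + 1) A' (B + 1) B' (C + 1) x y q) * C⁻¹) := by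
          rw [(hg.mul_left B).tsum_mul_right C⁻¹]
      _ = x • (B * (∑' q : ℕ × ℕ, af3T (A + 1) A' (B + 1) B' (C + 1) x y q) * C⁻¹) := by
          rw [hg.tsum_mul_left B]
  rw [← hsub]
  abel
lemma contiguous_A' (A A' B B' C : M) (x y : ℂ)
    (hC : ∀ n : ℕ, IsUnit (C + (n : ℂ) • (1 : M)))
    (hB'C : B' * C = C * B')
    (hx : ‖x‖ < 1) (hy : ‖y‖ < 1) :
    appellF3 A (A' + 1) B B' C x y = appellF3 A A' B B' C x y +
      y • (appellF3 A (A' + 1) B (B' + 1) (C + 1) x y * B' * C⁻¹) := by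
  have hC' := hC_shift hC
  have h1 : Summable (af3T A (A' + 1) B B' C x y) := af3T_summable _ _ _ _ _ _ _ hC hx hy
  have h0 : Summable (af3T A A' B B' C x y) := af3T_summable _ _ _ _ _ _ _ hC hx hy
  have hg : Summable (af3T A (A' + 1) B (B' + 1) (C + 1) x y) :=
    af3T_summable _ _ _ _ _ _ _ hC' hx hy
  have hB'C1 : Commute B' (C + 1) := by
    unfold Commute SemiconjBy
    rw [mul_add, add_mul, mul_one, one_mul, hB'C]
  have key : ∀ p : ℕ × ℕ,
      af3T A (A' + 1) B B' C x y (p.1, p.2 + 1) - af3T A A' B B' C x y (p.1, p.2 + 1)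
      = y • (af3T A (A' + 1) B (B' + 1) (C + 1) x y p * B' * C⁻¹) := by
    rintro ⟨m, n⟩
    have hBT : B' * (mPoch (C + 1) (m + n))⁻¹ = (mPoch (C + 1) (m + n))⁻¹ * B' :=
      commute_inv (commute_mPoch hB'C1 (m + n)).eq (isUnit_mPoch hC' (m + n))
    show (((m.factorial : ℂ) * ((n + 1).factorial : ℂ))⁻¹ * x ^ m * y ^ (n + 1)) •
        (mPoch A m * mPoch (A' + 1) (n + 1) * mPoch B m * mPoch B' (n + 1)
          * (mPoch C (m + (n + 1)))⁻¹)
      - (((m.factorial : ℂ) * ((n + 1).factorial : ℂ))⁻¹ * x ^ m * y ^ (n + 1)) •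
        (mPoch A m * mPoch A' (n + 1) * mPoch B m * mPoch B' (n + 1)
          * (mPoch C (m + (n + 1)))⁻¹)
      = y • ((((m.factorial : ℂ) * (n.factorial : ℂ))⁻¹ * x ^ m * y ^ n) •
          (mPoch A m * mPoch (A' + 1) n * mPoch B m * mPoch (B' + 1) n
            * (mPoch (C + 1) (m + n))⁻¹) * B' * C⁻¹)
    rw [← smul_sub]
    simp only [← sub_mul]
    rw [← mul_sub, mPoch_diff A' n]
    have emat : mPoch A m * mPoch (A' + 1) n * mPoch B m * mPoch B' (n + 1)
        * (mPoch C (m + (n + 1)))⁻¹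
        = mPoch A m * mPoch (A' + 1) n * mPoch B m * mPoch (B' + 1) n
          * (mPoch (C + 1) (m + n))⁻¹ * B' * C⁻¹ := by
      have e2 : (mPoch C (m + (n + 1)))⁻¹ = (mPoch (C + 1) (m + n))⁻¹ * C⁻¹ := by
        have hmn : m + (n + 1) = (m + n) + 1 := by omega
        rw [hmn, mPoch_inv_succ]
      rw [mPoch_right B' n, e2,
        ← mul_assoc (mPoch A m * mPoch (A' + 1) n * mPoch B m) (mPoch (B' + 1) n) B']
      simp only [mul_assoc]
      rw [show B' * ((mPoch (C + 1) (m + n))⁻¹ * C⁻¹)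
          = (mPoch (C + 1) (m + n))⁻¹ * (B' * C⁻¹) from by rw [← mul_assoc, hBT, mul_assoc]]
    have escal : ((m.factorial : ℂ) * ((n + 1).factorial : ℂ))⁻¹ * x ^ m * y ^ (n + 1)
        * ((n : ℂ) + 1) = y * (((m.factorial : ℂ) * (n.factorial : ℂ))⁻¹ * x ^ m * y ^ n) := by
      have hfs : ((n + 1).factorial : ℂ) = ((n : ℂ) + 1) * (n.factorial : ℂ) := by
        rw [Nat.factorial_succ]; push_cast; ring
      have h1 : (m.factorial : ℂ) ≠ 0 := Nat.cast_ne_zero.mpr m.factorial_ne_zero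
      have h2 : (n.factorial : ℂ) ≠ 0 := Nat.cast_ne_zero.mpr n.factorial_ne_zero
      have h3 : ((n : ℂ) + 1) ≠ 0 := Nat.cast_add_one_ne_zero n
      rw [hfs]
      field_simp
      ring
    simp only [smul_mul_assoc, mul_smul_comm, smul_smul]
    rw [escal, emat]
  have hinj : Function.Injective (fun q : ℕ × ℕ => (q.1, q.2 + 1)) := by
    rintro ⟨a, b⟩ ⟨c, d⟩ h
    simp only [Prod.mk.injEq] at h
    simp [Prod.ext_iff]
    omega
  have hsupp : Function.support
      (fun p : ℕ × ℕ => af3T A (A' + 1) B B' C x y p - af3T A A' B B' C x y p)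
      ⊆ Set.range (fun q : ℕ × ℕ => (q.1, q.2 + 1)) := by
    intro p hp
    rcases p with ⟨m, n⟩
    rcases n with _ | n
    · exfalso
      apply hp
      show (((m.factorial : ℂ) * (Nat.factorial 0 : ℂ))⁻¹ * x ^ m * y ^ 0) •
          (mPoch A m * mPoch (A' + 1) 0 * mPoch B m * mPoch B' 0 * (mPoch C (m + 0))⁻¹)
        - (((m.factorial : ℂ) * (Nat.factorial 0 : ℂ))⁻¹ * x ^ m * y ^ 0) •
          (mPoch A m * mPoch A' 0 * mPoch B m * mPoch B' 0 * (mPoch C (m + 0))⁻¹) = 0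
      simp only [mPoch_zero, sub_self]
    · exact ⟨(m, n), rfl⟩
  have hsub : appellF3 A (A' + 1) B B' C x y - appellF3 A A' B B' C x y
      = y • (appellF3 A (A' + 1) B (B' + 1) (C + 1) x y * B' * C⁻¹) := by
    rw [appellF3_eq, appellF3_eq, appellF3_eq, ← Summable.tsum_sub h1 h0, ← hinj.tsum_eq hsupp]
    calc ∑' q : ℕ × ℕ, (af3T A (A' + 1) B B' C x y (q.1, q.2 + 1)
          - af3T A A' B B' C x y (q.1, q.2 + 1))
        = ∑' q : ℕ × ℕ, y • (af3T A (A' + 1) B (B' + 1) (C + 1) x y q * B' * C⁻¹) :=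
          tsum_congr key
      _ = y • ∑' q : ℕ × ℕ, (af3T A (A' + 1) B (B' + 1) (C + 1) x y q * B' * C⁻¹) :=
          Summable.tsum_const_smul y ((hg.mul_right B').mul_right C⁻¹)
      _ = y • ((∑' q : ℕ × ℕ, af3T A (A' + 1) B (B' + 1) (C + 1) x y q * B') * C⁻¹) := by
          rw [(hg.mul_right B').tsum_mul_right C⁻¹]
      _ = y • ((∑' q : ℕ × ℕ, af3T A (A' + 1) B (B' + 1) (C + 1) x y q) * B' * C⁻¹) := by
          rw [hg.tsum_mul_right B']
  rw [← hsub]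
  abel

end Norm

end AF3

theorem appellF3_recursion_A {r : ℕ} (A A' B B' C : Matrix (Fin r) (Fin r) ℂ) (x y : ℂ) (s : ℕ)
    (hC : ∀ n : ℕ, IsUnit (C + (n : ℂ) • (1 : Matrix (Fin r) (Fin r) ℂ)))
    (hAA' : A * A' = A' * A) (hAB : A * B = B * A) (hA'B : A' * B = B * A')
    (hB'C : B' * C = C * B')
    (hx : ‖x‖ < 1) (hy : ‖y‖ < 1) :
    ((∀ k : ℕ, IsUnit (A + (k : ℂ) • (1 : Matrix (Fin r) (Fin r) ℂ))) →
      appellF3 (A + (s : ℂ) • 1) A' B B' C x y =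
        appellF3 A A' B B' C x y +
          x • (B * (∑ k ∈ Finset.Icc 1 s,
            appellF3 (A + (k : ℂ) • 1) A' (B + 1) B' (C + 1) x y) * C⁻¹)) ∧
    ((∀ k : ℕ, IsUnit (A' + (k : ℂ) • (1 : Matrix (Fin r) (Fin r) ℂ))) →
      appellF3 A (A' + (s : ℂ) • 1) B B' C x y =
        appellF3 A A' B B' C x y +
          y • ((∑ k ∈ Finset.Icc 1 s,
            appellF3 A (A' + (k : ℂ) • 1) B (B' + 1) (C + 1) x y) * B' * C⁻¹)) ∧
    ((∀ k : ℕ, 1 ≤ k → k ≤ s → IsUnit (A - (k : ℂ) • (1 : Matrix (Fin r) (Fin r) ℂ))) →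
      appellF3 (A - (s : ℂ) • 1) A' B B' C x y =
        appellF3 A A' B B' C x y -
          x • (B * (∑ k ∈ Finset.range s,
            appellF3 (A - (k : ℂ) • 1) A' (B + 1) B' (C + 1) x y) * C⁻¹)) ∧
    ((∀ k : ℕ, 1 ≤ k → k ≤ s → IsUnit (A' - (k : ℂ) • (1 : Matrix (Fin r) (Fin r) ℂ))) →
      appellF3 A (A' - (s : ℂ) • 1) B B' C x y =
        appellF3 A A' B B' C x y -
          y • ((∑ k ∈ Finset.range s,
            appellF3 A (A' - (k : ℂ) • 1) B (B' + 1) (C + 1) x y) * B' * C⁻¹)) := by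
  have hx' : ‖x‖ < 1 := hx
  have hy' : ‖y‖ < 1 := hy
  refine ⟨?_, ?_, ?_, ?_⟩
  · intro _
    induction s with
    | zero =>
      simp [Finset.Icc_eq_empty_of_lt]
    | succ s ih =>
      have hABs : (A + (s : ℂ) • 1) * B = B * (A + (s : ℂ) • 1) := by
        rw [add_mul, mul_add, hAB, smul_mul_assoc, mul_smul_comm, one_mul, mul_one]
      have hstep := AF3.contiguous_A (A + (s : ℂ) • 1) A' B B' C x y hC hABs hA'B hx' hy'
      have hcast : A + (s : ℂ) • (1 : Matrix (Fin r) (Fin r) ℂ) + 1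
          = A + ((s + 1 : ℕ) : ℂ) • 1 := by
        push_cast
        rw [add_smul, one_smul]
        abel
      rw [hcast] at hstep
      rw [hstep, ih, Finset.sum_Icc_succ_top (by omega : 1 ≤ s + 1), mul_add, add_mul, smul_add]
      abel
  · intro _
    induction s with
    | zero =>
      simp [Finset.Icc_eq_empty_of_lt]
    | succ s ih =>
      have hstep := AF3.contiguous_A' A (A' + (s : ℂ) • 1) B B' C x y hC hB'C hx' hy'
      have hcast : A' + (s : ℂ) • (1 : Matrix (Fin r) (Fin r) ℂ) + 1
          = A' + ((s + 1 : ℕ) : ℂ) • 1 := by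
        push_cast
        rw [add_smul, one_smul]
        abel
      rw [hcast] at hstep
      rw [hstep, ih, Finset.sum_Icc_succ_top (by omega : 1 ≤ s + 1), add_mul, add_mul, smul_add]
      abel
  · intro hinv
    induction s with
    | zero =>
      simp
    | succ s ih =>
      have ih' := ih (fun k h1 h2 => hinv k h1 (by omega))
      have hABs : (A - ((s + 1 : ℕ) : ℂ) • 1) * B = B * (A - ((s + 1 : ℕ) : ℂ) • 1) := by
        rw [sub_mul, mul_sub, hAB, smul_mul_assoc, mul_smul_comm, one_mul, mul_one]
      have hstep := AF3.contiguous_A (A - ((s + 1 : ℕ) : ℂ) • 1) A' B B' C x y hC hABs hA'B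
        hx' hy'
      have hcast : A - ((s + 1 : ℕ) : ℂ) • (1 : Matrix (Fin r) (Fin r) ℂ) + 1
          = A - (s : ℂ) • 1 := by
        push_cast
        rw [add_smul, one_smul]
        abel
      rw [hcast] at hstep
      have h2 : appellF3 (A - ((s + 1 : ℕ) : ℂ) • 1) A' B B' C x y
          = appellF3 (A - (s : ℂ) • 1) A' B B' C x y
            - x • (B * appellF3 (A - (s : ℂ) • 1) A' (B + 1) B' (C + 1) x y * C⁻¹) := by
        rw [hstep]
        abel
      rw [h2, ih', Finset.sum_range_succ, mul_add, add_mul, smul_add]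
      abel
  · intro hinv
    induction s with
    | zero =>
      simp
    | succ s ih =>
      have ih' := ih (fun k h1 h2 => hinv k h1 (by omega))
      have hstep := AF3.contiguous_A' A (A' - ((s + 1 : ℕ) : ℂ) • 1) B B' C x y hC hB'C hx' hy'
      have hcast : A' - ((s + 1 : ℕ) : ℂ) • (1 : Matrix (Fin r) (Fin r) ℂ) + 1
          = A' - (s : ℂ) • 1 := by
        push_cast
        rw [add_smul, one_smul]
        abel
      rw [hcast] at hstep
      have h2 : appellF3 A (A' - ((s + 1 : ℕ) : ℂ) • 1) B B' C x y
          = appellF3 A (A' - (s : ℂ) • 1) B B' C x y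
            - y • (appellF3 A (A' - (s : ℂ) • 1) B (B' + 1) (C + 1) x y * B' * C⁻¹) := by
        rw [hstep]
        abel
      rw [h2, ih', Finset.sum_range_succ, add_mul, add_mul, smul_add]
      abel
end

section
/- Let A, A', B, B', C ∈ ℂ^{r×r} with A, A', B pairwise commuting and B'C = CB', let s be a non-negative integer, and suppose C + nI is invertible for all integers n ≥ 0 and C − kI is invertible for all integers 1 ≤ k ≤ s; let |x| < 1, |y| < 1. Then F₃(A, A', B, B'; C−sI; x, y) = F₃(A, A', B, B'; C; x, y) + x·A·B·∑_{k=1}^{s} [F₃(A+I, A', B+I, B'; C+(2−k)I; x, y)]·(C−kI)⁻¹·(C−(k−1)I)⁻¹ + y·A'·∑_{k=1}^{s} [F₃(A, A'+I, B, B'+I; C+(2−k)I; x, y)·(C−kI)⁻¹·(C−(k−1)I)⁻¹]·B'. -/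
section Aux
variable {r : ℕ}
local notation "Mat" => Matrix (Fin r) (Fin r) ℂ

lemma mPoch_succ (A : Mat) (n : ℕ) : mPoch A (n+1) = mPoch A n * (A + (n : ℂ) • 1) := rfl

lemma commute_add_smul {X A : Mat} (h : Commute X A) (z : ℂ) : Commute X (A + z • 1) :=
  h.add_right ((Commute.one_right X).smul_right z)

lemma commute_mPoch {X A : Mat} (h : Commute X A) (n : ℕ) : Commute X (mPoch A n) := by
  induction n with
  | zero => exact Commute.one_right X
  | succ n ih => exact ih.mul_right (commute_add_smul h _)

lemma commute_nonsing_inv {X A : Mat} (h : Commute X A) (hA : IsUnit A) : Commute X A⁻¹ := by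
  have hd : IsUnit A.det := (Matrix.isUnit_iff_isUnit_det A).mp hA
  have h1 : A⁻¹ * A = 1 := Matrix.nonsing_inv_mul A hd
  have h2 : A * A⁻¹ = 1 := Matrix.mul_nonsing_inv A hd
  show X * A⁻¹ = A⁻¹ * X
  calc X * A⁻¹ = A⁻¹ * (A * (X * A⁻¹)) := by rw [← mul_assoc, h1, one_mul]
  _ = A⁻¹ * (X * (A * A⁻¹)) := by rw [← mul_assoc A X, ← h.eq, mul_assoc]
  _ = A⁻¹ * X := by rw [h2, mul_one]

lemma mPoch_isUnit {A : Mat} {n : ℕ} (h : ∀ i : ℕ, i < n → IsUnit (A + (i : ℂ) • 1)) :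
    IsUnit (mPoch A n) := by
  induction n with
  | zero => exact isUnit_one
  | succ n ih =>
      exact (ih fun i hi => h i (hi.trans n.lt_succ_self)).mul (h n n.lt_succ_self)

lemma mPoch_succ_left (A : Mat) (n : ℕ) : mPoch A (n+1) = A * mPoch (A+1) n := by
  induction n with
  | zero => simp [mPoch]
  | succ n ih =>
      rw [mPoch_succ, ih, mPoch_succ, mul_assoc]
      congr 2
      push_cast
      rw [add_smul, one_smul]
      abel


lemma mPoch_sub_one_inv (D : Mat) (N : ℕ)
    (hD : ∀ i : ℕ, i < N → IsUnit (D + (i:ℂ) • 1)) (hD1 : IsUnit (D - 1)) :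
    (mPoch (D - 1) N)⁻¹ = (mPoch D N)⁻¹ + (N:ℂ) • ((mPoch D N)⁻¹ * (D-1)⁻¹) := by
  cases N with
  | zero => simp [mPoch]
  | succ M =>
    have hMunit : IsUnit (mPoch D (M+1)) := mPoch_isUnit hD
    have hd1 : IsUnit (D-1).det := (Matrix.isUnit_iff_isUnit_det _).mp hD1
    have hDM : IsUnit (D + (M:ℂ) • 1) := hD M M.lt_succ_self
    have hdm : IsUnit (D + (M:ℂ) • 1).det := (Matrix.isUnit_iff_isUnit_det _).mp hDM
    have e1 : mPoch (D - 1) (M+1) = (D-1) * mPoch D M := by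
      rw [mPoch_succ_left]; congr 1; rw [sub_add_cancel]
    have e2 : (mPoch D M)⁻¹ = (D + (M:ℂ) • 1) * (mPoch D (M+1))⁻¹ := by
      rw [mPoch_succ, Matrix.mul_inv_rev, ← mul_assoc, Matrix.mul_nonsing_inv _ hdm, one_mul]
    have cP : Commute (D + (M:ℂ) • 1) ((mPoch D (M+1))⁻¹) :=
      commute_nonsing_inv
        (commute_mPoch ((commute_add_smul (Commute.refl D) _).symm) _) hMunit
    have eD : D + (M:ℂ) • 1 = (D - 1) + ((M+1:ℕ):ℂ) • 1 := by
      push_cast; rw [add_smul, one_smul]; abel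
    calc (mPoch (D-1) (M+1))⁻¹ = (mPoch D M)⁻¹ * (D-1)⁻¹ := by
          rw [e1, Matrix.mul_inv_rev]
    _ = (mPoch D (M+1))⁻¹ * (D + (M:ℂ) • 1) * (D-1)⁻¹ := by rw [e2, cP.eq]
    _ = (mPoch D (M+1))⁻¹ * ((D - 1) + ((M+1:ℕ):ℂ) • 1) * (D-1)⁻¹ := by rw [eD]
    _ = (mPoch D (M+1))⁻¹ + ((M+1:ℕ):ℂ) • ((mPoch D (M+1))⁻¹ * (D-1)⁻¹) := by
          rw [mul_add, add_mul, mul_assoc, Matrix.mul_nonsing_inv _ hd1, mul_one,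
            mul_smul_comm, mul_one, smul_mul_assoc]


noncomputable def f3term (A A' B B' C : Mat) (x y : ℂ) (p : ℕ × ℕ) : Mat :=
  (((p.1.factorial : ℂ) * (p.2.factorial : ℂ))⁻¹ * x ^ p.1 * y ^ p.2) •
    (mPoch A p.1 * mPoch A' p.2 * mPoch B p.1 * mPoch B' p.2 * (mPoch C (p.1 + p.2))⁻¹)

lemma f3term_step (A A' B B' D : Mat) (x y : ℂ)
    (hD : ∀ i : ℕ, IsUnit (D + (i:ℂ) • 1)) (hD1 : IsUnit (D-1)) (p : ℕ × ℕ) :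
    f3term A A' B B' (D-1) x y p
      = f3term A A' B B' D x y p
        + ((p.1+p.2 : ℕ):ℂ) • (f3term A A' B B' D x y p * (D-1)⁻¹) := by
  unfold f3term
  rw [mPoch_sub_one_inv D (p.1+p.2) (fun i _ => hD i) hD1]
  rw [mul_add, smul_add, mul_smul_comm, smul_comm, smul_mul_assoc, ← mul_assoc]

lemma f3term_telescope (A A' B B' C : Mat) (x y : ℂ) (s : ℕ)
    (hU : ∀ j : ℕ, j ≤ s → ∀ i : ℕ, IsUnit (C - (j:ℂ) • 1 + (i:ℂ) • 1))
    (p : ℕ × ℕ) :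
    f3term A A' B B' (C - (s:ℂ) • 1) x y p
      = f3term A A' B B' C x y p + ∑ j ∈ Finset.Icc 1 s, ((p.1+p.2:ℕ):ℂ) •
          (f3term A A' B B' (C - ((j:ℂ)-1) • 1) x y p * (C - (j:ℂ) • 1)⁻¹) := by
  induction s with
  | zero => simp
  | succ s ih =>
    have key : C - ((s+1:ℕ):ℂ) • 1 = (C - (s:ℂ) • 1) - 1 := by
      push_cast; rw [add_smul, one_smul]; abel
    have hD : ∀ i : ℕ, IsUnit ((C - (s:ℂ) • 1) + (i:ℂ) • 1) :=
      hU s (Nat.le_succ s)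
    have hD1 : IsUnit ((C - (s:ℂ) • 1) - 1) := by
      rw [← key]
      simpa using hU (s+1) le_rfl 0
    rw [key, f3term_step A A' B B' _ x y hD hD1 p]
    nth_rewrite 1 [ih (fun j hj i => hU j (hj.trans (Nat.le_succ s)) i)]
    have e1 : C - ((((s+1:ℕ)):ℂ) - 1) • 1 = C - (s:ℂ) • 1 := by push_cast; rw [add_sub_cancel_right]
    rw [Finset.sum_Icc_succ_top (Nat.le_add_left 1 s), e1, ← key, add_assoc]


lemma one_eq_one_smul : (1 : Mat) = (1:ℂ) • (1 : Mat) := (one_smul ℂ (1:Mat)).symm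

lemma pull_left7 (a b p1 p2 p3 p4 q e1 e2 : Mat)
    (h1 : Commute b p1) (h2 : Commute b p2) :
    (a*p1) * p2 * (b*p3) * p4 * (q*e1) * e2 = a*b*(p1*p2*p3*p4*q*(e1*e2)) := by
  calc (a*p1) * p2 * (b*p3) * p4 * (q*e1) * e2
      = a*(p1*(p2*b))*(p3*(p4*(q*(e1*e2)))) := by noncomm_ring
  _ = a*(p1*(b*p2))*(p3*(p4*(q*(e1*e2)))) := by rw [h2.eq]
  _ = a*((p1*b)*p2)*(p3*(p4*(q*(e1*e2)))) := by noncomm_ring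
  _ = a*((b*p1)*p2)*(p3*(p4*(q*(e1*e2)))) := by rw [h1.eq]
  _ = a*b*(p1*p2*p3*p4*q*(e1*e2)) := by noncomm_ring

lemma pull_both7 (a' b' p1 p2 p3 p4 q e1 e2 : Mat)
    (h1 : Commute a' p1) (h4 : Commute b' p4) (hq : Commute b' q)
    (he1 : Commute b' e1) (he2 : Commute b' e2) :
    p1 * (a'*p2) * p3 * (b'*p4) * (q*e1) * e2
      = a' * (p1*p2*p3*p4*q*(e1*e2)) * b' := by
  calc p1 * (a'*p2) * p3 * (b'*p4) * (q*e1) * e2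
      = (p1*a')*(p2*(p3*((b'*p4)*(q*(e1*e2))))) := by noncomm_ring
  _ = (a'*p1)*(p2*(p3*((b'*p4)*(q*(e1*e2))))) := by rw [h1.eq]
  _ = (a'*p1)*(p2*(p3*((p4*b')*(q*(e1*e2))))) := by rw [h4.eq]
  _ = (a'*p1)*(p2*(p3*(p4*((b'*q)*(e1*e2))))) := by noncomm_ring
  _ = (a'*p1)*(p2*(p3*(p4*((q*b')*(e1*e2))))) := by rw [hq.eq]
  _ = (a'*p1)*(p2*(p3*(p4*(q*((b'*e1)*e2))))) := by noncomm_ring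
  _ = (a'*p1)*(p2*(p3*(p4*(q*((e1*b')*e2))))) := by rw [he1.eq]
  _ = (a'*p1)*(p2*(p3*(p4*(q*(e1*(b'*e2)))))) := by noncomm_ring
  _ = (a'*p1)*(p2*(p3*(p4*(q*(e1*(e2*b')))))) := by rw [he2.eq]
  _ = a' * (p1*p2*p3*p4*q*(e1*e2)) * b' := by noncomm_ring

lemma f3term_shift1 (A A' B B' D E : Mat) (x y : ℂ) (m n : ℕ)
    (hBA : Commute B A) (hBA' : Commute B A') :
    ((m+1 : ℕ):ℂ) • (f3term A A' B B' D x y (m+1, n) * E)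
      = x • (A * B * (f3term (A+1) A' (B+1) B' (D+1) x y (m, n) * (D⁻¹ * E))) := by
  have hidx : m + 1 + n = (m + n) + 1 := by omega
  have h1 : Commute B (mPoch (A+1) m) :=
    commute_mPoch (hBA.add_right (Commute.one_right B)) m
  have h2 : Commute B (mPoch A' n) := commute_mPoch hBA' n
  show ((m+1 : ℕ):ℂ) • (((((m+1).factorial : ℂ) * (n.factorial : ℂ))⁻¹ * x ^ (m+1) * y ^ n) •
      (mPoch A (m+1) * mPoch A' n * mPoch B (m+1) * mPoch B' n * (mPoch D (m+1+n))⁻¹) * E)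
      = x • (A * B * ((((m.factorial : ℂ) * (n.factorial : ℂ))⁻¹ * x ^ m * y ^ n) •
        (mPoch (A+1) m * mPoch A' n * mPoch (B+1) m * mPoch B' n * (mPoch (D+1) (m+n))⁻¹)
          * (D⁻¹ * E)))
  rw [hidx, mPoch_succ_left A, mPoch_succ_left B, mPoch_succ_left D, Matrix.mul_inv_rev]
  rw [smul_mul_assoc, smul_smul,
    pull_left7 A B (mPoch (A+1) m) (mPoch A' n) (mPoch (B+1) m) (mPoch B' n)
      ((mPoch (D+1) (m+n))⁻¹) D⁻¹ E h1 h2]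
  rw [smul_mul_assoc, mul_smul_comm, smul_smul]
  congr 1
  have hm : ((m.factorial : ℂ)) ≠ 0 := Nat.cast_ne_zero.mpr m.factorial_ne_zero
  have hn : ((n.factorial : ℂ)) ≠ 0 := Nat.cast_ne_zero.mpr n.factorial_ne_zero
  have hm1 : ((m+1:ℕ):ℂ) ≠ 0 := Nat.cast_ne_zero.mpr (Nat.succ_ne_zero m)
  have hfs : (((m+1).factorial : ℂ)) = ((m+1:ℕ):ℂ) * (m.factorial : ℂ) := by
    rw [Nat.factorial_succ]; push_cast; ring
  rw [hfs, pow_succ, mul_inv, mul_inv]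
  have hc := mul_inv_cancel₀ hm1
  linear_combination (((m.factorial:ℂ))⁻¹ * ((n.factorial:ℂ))⁻¹ * x^m * x * y^n) * hc

lemma f3term_shift2 (A A' B B' D E : Mat) (x y : ℂ) (m n : ℕ)
    (hA'A : Commute A' A) (hB'q : Commute B' ((mPoch (D+1) (m+n))⁻¹))
    (hB'Dinv : Commute B' D⁻¹) (hB'E : Commute B' E) :
    ((n+1 : ℕ):ℂ) • (f3term A A' B B' D x y (m, n+1) * E)
      = y • (A' * (f3term A (A'+1) B (B'+1) (D+1) x y (m, n) * (D⁻¹ * E)) * B') := by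
  have hidx : m + (n + 1) = (m + n) + 1 := by omega
  have h1 : Commute A' (mPoch A m) := commute_mPoch hA'A m
  have h4 : Commute B' (mPoch (B'+1) n) :=
    commute_mPoch ((Commute.refl B').add_right (Commute.one_right B')) n
  show ((n+1 : ℕ):ℂ) • ((((m.factorial : ℂ) * ((n+1).factorial : ℂ))⁻¹ * x ^ m * y ^ (n+1)) •
      (mPoch A m * mPoch A' (n+1) * mPoch B m * mPoch B' (n+1) * (mPoch D (m+(n+1)))⁻¹) * E)
      = y • (A' * ((((m.factorial : ℂ) * (n.factorial : ℂ))⁻¹ * x ^ m * y ^ n) •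
        (mPoch A m * mPoch (A'+1) n * mPoch B m * mPoch (B'+1) n * (mPoch (D+1) (m+n))⁻¹)
          * (D⁻¹ * E)) * B')
  rw [hidx, mPoch_succ_left A', mPoch_succ_left B', mPoch_succ_left D, Matrix.mul_inv_rev]
  rw [smul_mul_assoc, smul_smul,
    pull_both7 A' B' (mPoch A m) (mPoch (A'+1) n) (mPoch B m) (mPoch (B'+1) n)
      ((mPoch (D+1) (m+n))⁻¹) D⁻¹ E h1 h4 hB'q hB'Dinv hB'E]
  rw [smul_mul_assoc, mul_smul_comm, smul_mul_assoc, smul_smul]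
  congr 1
  have hm : ((m.factorial : ℂ)) ≠ 0 := Nat.cast_ne_zero.mpr m.factorial_ne_zero
  have hn : ((n.factorial : ℂ)) ≠ 0 := Nat.cast_ne_zero.mpr n.factorial_ne_zero
  have hn1 : ((n+1:ℕ):ℂ) ≠ 0 := Nat.cast_ne_zero.mpr (Nat.succ_ne_zero n)
  have hfs : (((n+1).factorial : ℂ)) = ((n+1:ℕ):ℂ) * (n.factorial : ℂ) := by
    rw [Nat.factorial_succ]; push_cast; ring
  rw [hfs, pow_succ, mul_inv, mul_inv]
  have hc := mul_inv_cancel₀ hn1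
  linear_combination (((m.factorial:ℂ))⁻¹ * ((n.factorial:ℂ))⁻¹ * x^m * y^n * y) * hc

noncomputable def gterm (A A' B B' C : Mat) (x y : ℂ) (j : ℕ) (p : ℕ × ℕ) : Mat :=
  ((p.1 + p.2 : ℕ) : ℂ) •
    (f3term A A' B B' (C - ((j:ℂ) - 1) • 1) x y p * (C - (j:ℂ) • 1)⁻¹)

noncomputable def uterm (A A' B B' D E : Mat) (x y : ℂ) (p : ℕ × ℕ) : Mat :=
  ((p.1 : ℕ) : ℂ) • (f3term A A' B B' D x y p * E)

noncomputable def vterm (A A' B B' D E : Mat) (x y : ℂ) (p : ℕ × ℕ) : Mat :=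
  ((p.2 : ℕ) : ℂ) • (f3term A A' B B' D x y p * E)

lemma gterm_eq_add (A A' B B' C : Mat) (x y : ℂ) (j : ℕ) (p : ℕ × ℕ) :
    gterm A A' B B' C x y j p
      = uterm A A' B B' (C - ((j:ℂ) - 1) • 1) ((C - (j:ℂ) • 1)⁻¹) x y p
        + vterm A A' B B' (C - ((j:ℂ) - 1) • 1) ((C - (j:ℂ) • 1)⁻¹) x y p := by
  unfold gterm uterm vterm
  rw [← add_smul]
  norm_cast

section Summability
open Finset Filter Topology

attribute [local instance] Matrix.linftyOpNormedAddCommGroup Matrix.linftyOpNormedRing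
  Matrix.linftyOpNormedAlgebra

lemma norm_mPoch_le (A : Mat) (h1 : ‖(1 : Mat)‖ ≤ 1) (m : ℕ) :
    ‖mPoch A m‖ ≤ ∏ i ∈ Finset.range m, (‖A‖ + i) := by
  induction m with
  | zero => rw [show mPoch A 0 = (1:Mat) from rfl, Finset.prod_range_zero]; exact h1
  | succ m ih =>
    rw [mPoch_succ, Finset.prod_range_succ]
    refine (norm_mul_le _ _).trans (mul_le_mul ih ?_ (norm_nonneg _) ?_)
    · refine (norm_add_le _ _).trans ?_
      have h2 : ‖(m:ℂ) • (1 : Mat)‖ ≤ m := by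
        rw [norm_smul, RCLike.norm_natCast]
        calc (m:ℝ) * ‖(1:Mat)‖ ≤ (m:ℝ) * 1 := by
              exact mul_le_mul_of_nonneg_left h1 (Nat.cast_nonneg m)
        _ = m := mul_one _
      linarith
    · exact Finset.prod_nonneg fun i _ => by positivity

lemma norm_mPoch_inv_le (C : Mat) (h1 : ‖(1 : Mat)‖ ≤ 1)
    (hC : ∀ i : ℕ, IsUnit (C + (i:ℂ) • 1)) (N : ℕ) :
    ‖(mPoch C N)⁻¹‖ ≤ ∏ i ∈ Finset.range N, ‖(C + (i:ℂ) • 1)⁻¹‖ := by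
  induction N with
  | zero => rw [show mPoch C 0 = (1:Mat) from rfl, inv_one, Finset.prod_range_zero]; exact h1
  | succ N ih =>
    rw [mPoch_succ, Matrix.mul_inv_rev, Finset.prod_range_succ, mul_comm]
    refine (norm_mul_le _ _).trans (mul_le_mul le_rfl ih (norm_nonneg _) (norm_nonneg _))


set_option maxHeartbeats 1000000 in
lemma f3_summable (A A' B B' C : Mat) (x y : ℂ)
    (hC : ∀ n : ℕ, IsUnit (C + (n:ℂ) • 1))
    (hx : ‖x‖ < 1) (hy : ‖y‖ < 1) :
    Summable (f3term A A' B B' C x y) := by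
  rcases Nat.eq_zero_or_pos r with hr | hr
  · haveI : Subsingleton Mat := by
      subst hr
      exact ⟨fun a b => by ext i j; exact i.elim0⟩
    have hz : f3term A A' B B' C x y = fun _ => 0 := funext fun p => Subsingleton.elim _ _
    rw [hz]; exact summable_zero
  haveI : Nonempty (Fin r) := ⟨⟨0, hr⟩⟩
  have h1 : ‖(1 : Mat)‖ ≤ 1 := le_of_eq norm_one
  set q : ℝ := max ‖x‖ ‖y‖ with hq
  have hq0 : 0 ≤ q := le_trans (norm_nonneg x) (le_max_left _ _)
  have hq1 : q < 1 := max_lt hx hy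
  set δ : ℝ := (1 - q)/2 with hδ
  have hδ0 : 0 < δ := by rw [hδ]; linarith
  have h1δ : 0 < 1 - δ := by rw [hδ]; linarith
  set i₀ : ℕ := ⌈‖C‖ / δ⌉₊ + 1 with hi₀def
  have hi₀ : 1 ≤ i₀ := Nat.le_add_left 1 _
  have hi₀pos : (0:ℝ) < i₀ := by exact_mod_cast hi₀
  have hi₀C : ‖C‖ / δ ≤ i₀ := (Nat.le_ceil _).trans (by exact_mod_cast Nat.le_succ _)
  set c : ℕ → ℝ := fun i => ‖(C + (i:ℂ) • (1:Mat))⁻¹‖ with hc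
  have hcnn : ∀ i, 0 ≤ c i := fun i => norm_nonneg _
  have cbound : ∀ i : ℕ, i₀ ≤ i → c i ≤ 1/((1-δ) * i) := by
    intro i hi
    have hipos : (0:ℝ) < i := lt_of_lt_of_le hi₀pos (by exact_mod_cast hi)
    have hCi : ‖C‖ ≤ δ * i := by
      have h' : ‖C‖/δ ≤ (i:ℝ) := hi₀C.trans (by exact_mod_cast hi)
      calc ‖C‖ = (‖C‖/δ) * δ := by field_simp
      _ ≤ (i:ℝ) * δ := mul_le_mul_of_nonneg_right h' hδ0.le
      _ = δ * i := mul_comm _ _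
    have hdet : IsUnit (C + (i:ℂ) • (1:Mat)).det := (Matrix.isUnit_iff_isUnit_det _).mp (hC i)
    have hinv : (C + (i:ℂ) • (1:Mat))⁻¹ * (C + (i:ℂ) • (1:Mat)) = 1 :=
      Matrix.nonsing_inv_mul _ hdet
    set w : Mat := (C + (i:ℂ) • (1:Mat))⁻¹ with hwdef
    have expand : w * (C + (i:ℂ) • (1:Mat)) = w * C + (i:ℂ) • w := by
      rw [mul_add, mul_smul_comm, mul_one]
    have hw : (i:ℂ) • w = 1 - w * C := by rw [← hinv, expand]; abel
    have hnorm : (i:ℝ) * ‖w‖ ≤ 1 + ‖w‖ * ‖C‖ := by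
      have h2 : ‖(i:ℂ) • w‖ = (i:ℝ) * ‖w‖ := by rw [norm_smul, RCLike.norm_natCast]
      calc (i:ℝ) * ‖w‖ = ‖(i:ℂ) • w‖ := h2.symm
      _ = ‖1 - w * C‖ := by rw [hw]
      _ ≤ ‖(1:Mat)‖ + ‖w * C‖ := norm_sub_le _ _
      _ ≤ 1 + ‖w‖ * ‖C‖ := add_le_add h1 (norm_mul_le _ _)
    show ‖w‖ ≤ 1/((1-δ) * i)
    rw [le_div_iff₀ (mul_pos h1δ hipos)]
    nlinarith [norm_nonneg w, mul_nonneg (norm_nonneg w) (sub_nonneg.mpr hCi)]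
  set Dmax : ℝ := (∑ i ∈ range i₀, c i) + 1/((1-δ) * i₀) with hDmax
  have hsum_nn : 0 ≤ ∑ i ∈ range i₀, c i := Finset.sum_nonneg fun i _ => hcnn i
  have hlast_nn : 0 ≤ 1/((1-δ) * i₀) := le_of_lt (by positivity)
  set d : ℕ → ℝ := fun i => if i < i₀ then Dmax else 1/((1-δ) * i) with hd
  have hd_nn : ∀ i, 0 ≤ d i := by
    intro i
    by_cases hi : i < i₀
    · simp only [hd, if_pos hi]; exact add_nonneg hsum_nn hlast_nn
    · simp only [hd, if_neg hi]
      have : (0:ℝ) < i := lt_of_lt_of_le hi₀pos (by exact_mod_cast Nat.not_lt.mp hi)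
      positivity
  have hd_last : ∀ i, i₀ ≤ i → d i = 1/((1-δ) * i) := by
    intro i hi; simp only [hd, if_neg (Nat.not_lt.mpr hi)]
  have hcd : ∀ i, c i ≤ d i := by
    intro i
    by_cases hi : i < i₀
    · simp only [hd, if_pos hi]
      exact le_trans (Finset.single_le_sum (fun j _ => hcnn j) (Finset.mem_range.mpr hi))
        (le_add_of_nonneg_right hlast_nn)
    · rw [hd_last i (Nat.not_lt.mp hi)]; exact cbound i (Nat.not_lt.mp hi)
  have hd_anti : ∀ i j : ℕ, i ≤ j → d j ≤ d i := by
    intro i j hij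
    by_cases hj : j < i₀
    · have hi : i < i₀ := lt_of_le_of_lt hij hj
      simp only [hd, if_pos hi, if_pos hj, le_refl]
    · have hj' : i₀ ≤ j := Nat.not_lt.mp hj
      have hjpos : (0:ℝ) < j := lt_of_lt_of_le hi₀pos (by exact_mod_cast hj')
      rw [hd_last j hj']
      by_cases hi : i < i₀
      · simp only [hd, if_pos hi]
        refine le_trans ?_ (le_add_of_nonneg_left hsum_nn)
        rw [div_le_div_iff₀ (by positivity) (by positivity)]
        have : (i₀:ℝ) ≤ j := by exact_mod_cast hj'
        nlinarith
      · have hi' : i₀ ≤ i := Nat.not_lt.mp hi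
        have hipos : (0:ℝ) < i := lt_of_lt_of_le hi₀pos (by exact_mod_cast hi')
        rw [hd_last i hi', div_le_div_iff₀ (by positivity) (by positivity)]
        have : (i:ℝ) ≤ j := by exact_mod_cast hij
        nlinarith
  have hdsplit : ∀ m n : ℕ, ∏ i ∈ range (m+n), d i
      ≤ (∏ i ∈ range m, d i) * (∏ i ∈ range n, d i) := by
    intro m n
    rw [Finset.prod_range_add]
    refine mul_le_mul_of_nonneg_left
      (Finset.prod_le_prod (fun i _ => hd_nn _) (fun i _ => hd_anti i (m+i) (Nat.le_add_left i m)))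
      (Finset.prod_nonneg fun i _ => hd_nn i)
  -- generic one-dimensional summability
  have hgen : ∀ (e aa bb : ℝ), 0 ≤ e → e ≤ q → 0 ≤ aa → 0 ≤ bb →
      Summable (fun m : ℕ => ∏ i ∈ range m, (e * ((aa+i) * ((bb+i) * d i)) / (i+1))) := by
    intro e aa bb he heq haa hbb
    set step : ℕ → ℝ := fun i => e * ((aa+i) * ((bb+i) * d i)) / (i+1) with hstep
    have hstep_nn : ∀ i, 0 ≤ step i := by
      intro i
      have h0 : (0:ℝ) ≤ (aa+i) * ((bb+i) * d i) :=
        mul_nonneg (by positivity) (mul_nonneg (by positivity) (hd_nn i))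
      have : (0:ℝ) < (i:ℝ)+1 := by positivity
      exact div_nonneg (mul_nonneg he h0) this.le
    set L : ℝ := q / (1 - δ) with hL
    have hL1 : L < 1 := by rw [hL, div_lt_one h1δ, hδ]; linarith
    set rr : ℝ := (L + 1)/2 with hrr
    have hrr1 : rr < 1 := by rw [hrr]; linarith
    have hLrr : L < rr := by rw [hrr]; linarith
    have t1 : Tendsto (fun m : ℕ => (aa + m)/(m+1)) atTop (𝓝 1) := by
      have e1 : (fun m : ℕ => (aa + m)/(m+1)) = fun m : ℕ => (aa-1)/((m:ℝ)+1) + 1 := by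
        funext m
        have hm : ((m:ℝ)+1) ≠ 0 := by positivity
        field_simp
        ring
      rw [e1]
      have h2 : Tendsto (fun m : ℕ => (aa-1)/((m:ℝ)+1)) atTop (𝓝 0) := by
        have h3 := (tendsto_const_div_atTop_nhds_zero_nat (aa-1)).comp (tendsto_add_atTop_nat 1)
        have h4 : ((fun n : ℕ => (aa - 1) / (n:ℝ)) ∘ fun a => a + 1)
            = fun m : ℕ => (aa-1)/((m:ℝ)+1) := by
          funext m; simp only [Function.comp]; push_cast; ring
        rwa [h4] at h3
      simpa using h2.add tendsto_const_nhds
    have t2 : Tendsto (fun m : ℕ => (bb + m)/(m:ℝ)) atTop (𝓝 1) := by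
      have h2 : Tendsto (fun m : ℕ => bb/(m:ℝ) + 1) atTop (𝓝 1) := by
        simpa using (tendsto_const_div_atTop_nhds_zero_nat bb).add
          (tendsto_const_nhds (x := (1:ℝ)))
      refine h2.congr' ?_
      filter_upwards [eventually_ge_atTop 1] with m hm
      have hm0 : (m:ℝ) ≠ 0 := by
        have : (0:ℝ) < m := by exact_mod_cast hm
        exact this.ne'
      field_simp
    have t3 : Tendsto (fun m : ℕ => (e/(1-δ)) * ((aa+m)/(m+1) * ((bb+m)/(m:ℝ))))
        atTop (𝓝 (e/(1-δ))) := by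
      have := (tendsto_const_nhds (x := e/(1-δ))).mul (t1.mul t2)
      simpa using this
    have hev : ∀ᶠ m in atTop, step m < rr := by
      have hle : e/(1-δ) ≤ L := by rw [hL]; gcongr
      have hev1 : ∀ᶠ m : ℕ in atTop, (e/(1-δ)) * ((aa+m)/(m+1) * ((bb+m)/(m:ℝ))) < rr :=
        t3.eventually_lt_const (lt_of_le_of_lt hle hLrr)
      filter_upwards [hev1, eventually_ge_atTop (max i₀ 1)] with m hm1 hm2
      have hmi₀ : i₀ ≤ m := le_trans (le_max_left _ _) hm2
      have hm0 : (0:ℝ) < m := by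
        have : (1:ℕ) ≤ m := le_trans (le_max_right _ _) hm2
        exact_mod_cast this
      have heqm : step m = (e/(1-δ)) * ((aa+m)/(m+1) * ((bb+m)/(m:ℝ))) := by
        rw [hstep]
        simp only
        rw [hd_last m hmi₀]
        have h1' : ((m:ℝ)+1) ≠ 0 := by positivity
        field_simp
      rw [heqm]; exact hm1
    refine summable_of_ratio_norm_eventually_le hrr1 ?_
    filter_upwards [hev] with m hm
    have hP : 0 ≤ ∏ i ∈ range m, step i := Finset.prod_nonneg fun i _ => hstep_nn i
    rw [Real.norm_of_nonneg (Finset.prod_nonneg fun i _ => hstep_nn i),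
      Real.norm_of_nonneg hP, Finset.prod_range_succ]
    calc (∏ i ∈ range m, step i) * step m ≤ (∏ i ∈ range m, step i) * rr :=
          mul_le_mul_of_nonneg_left hm.le hP
    _ = rr * ∏ i ∈ range m, step i := mul_comm _ _
  -- product formula
  have prodval : ∀ (e aa bb : ℝ) (m : ℕ),
      ∏ i ∈ range m, (e * ((aa+i) * ((bb+i) * d i)) / (i+1))
        = e^m * ((∏ i ∈ range m, (aa+i)) * ((∏ i ∈ range m, (bb+i)) * ∏ i ∈ range m, d i))
            / (m.factorial : ℝ) := by
    intro e aa bb m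
    induction m with
    | zero => simp
    | succ m ih =>
      rw [Finset.prod_range_succ, ih, Finset.prod_range_succ, Finset.prod_range_succ,
        Finset.prod_range_succ, Nat.factorial_succ]
      have hf : ((m.factorial : ℝ)) ≠ 0 := by exact_mod_cast m.factorial_ne_zero
      have hm1 : ((m:ℝ)+1) ≠ 0 := by positivity
      push_cast
      field_simp
      ring
  set H : ℕ → ℝ := fun m => ∏ i ∈ range m, (‖x‖ * ((‖A‖+i) * ((‖B‖+i) * d i)) / (i+1)) with hH
  set K : ℕ → ℝ := fun n => ∏ i ∈ range n, (‖y‖ * ((‖A'‖+i) * ((‖B'‖+i) * d i)) / (i+1)) with hK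
  have hHs : Summable H := hgen ‖x‖ ‖A‖ ‖B‖ (norm_nonneg x) (le_max_left _ _)
    (norm_nonneg A) (norm_nonneg B)
  have hKs : Summable K := hgen ‖y‖ ‖A'‖ ‖B'‖ (norm_nonneg y) (le_max_right _ _)
    (norm_nonneg A') (norm_nonneg B')
  have hHnn : ∀ m, 0 ≤ H m := by
    intro m
    refine Finset.prod_nonneg fun i _ => ?_
    have := hd_nn i
    have h0 : (0:ℝ) < (i:ℝ)+1 := by positivity
    have h2 : (0:ℝ) ≤ ‖x‖ * ((‖A‖+i) * ((‖B‖+i) * d i)) :=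
      mul_nonneg (norm_nonneg x) (mul_nonneg (by positivity) (mul_nonneg (by positivity) this))
    exact div_nonneg h2 h0.le
  have hKnn : ∀ n, 0 ≤ K n := by
    intro n
    refine Finset.prod_nonneg fun i _ => ?_
    have := hd_nn i
    have h0 : (0:ℝ) < (i:ℝ)+1 := by positivity
    have h2 : (0:ℝ) ≤ ‖y‖ * ((‖A'‖+i) * ((‖B'‖+i) * d i)) :=
      mul_nonneg (norm_nonneg y) (mul_nonneg (by positivity) (mul_nonneg (by positivity) this))
    exact div_nonneg h2 h0.le
  refine Summable.of_norm_bounded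
    (hHs.mul_of_nonneg hKs hHnn hKnn) ?_
  rintro ⟨m, n⟩
  have nm5 : ∀ M1 M2 M3 M4 M5 : Mat, ‖M1*M2*M3*M4*M5‖ ≤ ‖M1‖*‖M2‖*‖M3‖*‖M4‖*‖M5‖ := by
    intro M1 M2 M3 M4 M5
    calc ‖M1*M2*M3*M4*M5‖ ≤ ‖M1*M2*M3*M4‖*‖M5‖ := norm_mul_le _ _
    _ ≤ ‖M1*M2*M3‖*‖M4‖*‖M5‖ := by
        exact mul_le_mul_of_nonneg_right (norm_mul_le _ _) (norm_nonneg _)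
    _ ≤ ‖M1*M2‖*‖M3‖*‖M4‖*‖M5‖ := by
        refine mul_le_mul_of_nonneg_right (mul_le_mul_of_nonneg_right (norm_mul_le _ _)
          (norm_nonneg _)) (norm_nonneg _)
    _ ≤ ‖M1‖*‖M2‖*‖M3‖*‖M4‖*‖M5‖ := by
        refine mul_le_mul_of_nonneg_right (mul_le_mul_of_nonneg_right
          (mul_le_mul_of_nonneg_right (norm_mul_le _ _) (norm_nonneg _))
          (norm_nonneg _)) (norm_nonneg _)
  have coefnorm : ‖(((m.factorial:ℂ) * (n.factorial:ℂ))⁻¹ * x ^ m * y ^ n)‖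
      = ((m.factorial : ℝ) * (n.factorial : ℝ))⁻¹ * ‖x‖ ^ m * ‖y‖ ^ n := by
    rw [norm_mul, norm_mul, norm_inv, norm_mul, norm_pow, norm_pow,
      RCLike.norm_natCast, RCLike.norm_natCast]
  have hmatb : ‖mPoch A m * mPoch A' n * mPoch B m * mPoch B' n * (mPoch C (m+n))⁻¹‖
      ≤ (∏ i ∈ range m, (‖A‖+i)) * (∏ i ∈ range n, (‖A'‖+i)) * (∏ i ∈ range m, (‖B‖+i))
        * (∏ i ∈ range n, (‖B'‖+i)) * ((∏ i ∈ range m, d i) * (∏ i ∈ range n, d i)) := by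
    have hc5 : ‖(mPoch C (m+n))⁻¹‖ ≤ (∏ i ∈ range m, d i) * (∏ i ∈ range n, d i) := by
      refine le_trans (norm_mPoch_inv_le C h1 hC (m+n)) ?_
      refine le_trans (Finset.prod_le_prod (fun i _ => hcnn i) (fun i _ => hcd i)) ?_
      exact hdsplit m n
    refine le_trans (nm5 _ _ _ _ _) ?_
    gcongr <;>
      first
        | exact norm_mPoch_le A h1 m
        | exact norm_mPoch_le A' h1 n
        | exact norm_mPoch_le B h1 m
        | exact norm_mPoch_le B' h1 n
        | exact hc5
        | positivity
  have key : ‖f3term A A' B B' C x y (m,n)‖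
      ≤ (((m.factorial : ℝ) * (n.factorial : ℝ))⁻¹ * ‖x‖ ^ m * ‖y‖ ^ n)
        * ((∏ i ∈ range m, (‖A‖+i)) * (∏ i ∈ range n, (‖A'‖+i)) * (∏ i ∈ range m, (‖B‖+i))
          * (∏ i ∈ range n, (‖B'‖+i)) * ((∏ i ∈ range m, d i) * (∏ i ∈ range n, d i))) := by
    have : ‖f3term A A' B B' C x y (m,n)‖
        = ‖(((m.factorial:ℂ) * (n.factorial:ℂ))⁻¹ * x ^ m * y ^ n)‖
          * ‖mPoch A m * mPoch A' n * mPoch B m * mPoch B' n * (mPoch C (m+n))⁻¹‖ := by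
      rw [show f3term A A' B B' C x y (m,n)
          = (((m.factorial:ℂ) * (n.factorial:ℂ))⁻¹ * x ^ m * y ^ n) •
            (mPoch A m * mPoch A' n * mPoch B m * mPoch B' n * (mPoch C (m+n))⁻¹) from rfl,
        norm_smul]
    rw [this, coefnorm]
    refine mul_le_mul_of_nonneg_left hmatb ?_
    positivity
  refine key.trans (le_of_eq ?_)
  show _ = H m * K n
  rw [hH, hK]
  dsimp only
  rw [prodval ‖x‖ ‖A‖ ‖B‖ m, prodval ‖y‖ ‖A'‖ ‖B'‖ n]
  have hfm : ((m.factorial : ℝ)) ≠ 0 := by exact_mod_cast m.factorial_ne_zero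
  have hfn : ((n.factorial : ℝ)) ≠ 0 := by exact_mod_cast n.factorial_ne_zero
  field_simp


lemma summable_conj {f : ℕ × ℕ → Mat} (hf : Summable f) (c : ℂ) (M N : Mat) :
    Summable (fun p => c • (M * (f p * N))) := by
  let φ : Mat →L[ℂ] Mat := LinearMap.toContinuousLinearMap
    (c • ((LinearMap.mulLeft ℂ M).comp (LinearMap.mulRight ℂ N)))
  exact hf.map φ.toLinearMap.toAddMonoidHom φ.continuous

lemma tsum_conj {f : ℕ × ℕ → Mat} (hf : Summable f) (c : ℂ) (M N : Mat) :
    ∑' p, c • (M * (f p * N)) = c • (M * ((∑' p, f p) * N)) := by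
  let φ : Mat →L[ℂ] Mat := LinearMap.toContinuousLinearMap
    (c • ((LinearMap.mulLeft ℂ M).comp (LinearMap.mulRight ℂ N)))
  exact (φ.map_tsum hf).symm

lemma summable_conj2 {f : ℕ × ℕ → Mat} (hf : Summable f) (c : ℂ) (M N R : Mat) :
    Summable (fun p => c • (M * (f p * N) * R)) := by
  let φ : Mat →L[ℂ] Mat := LinearMap.toContinuousLinearMap
    (c • ((LinearMap.mulRight ℂ R).comp ((LinearMap.mulLeft ℂ M).comp
      (LinearMap.mulRight ℂ N))))
  exact hf.map φ.toLinearMap.toAddMonoidHom φ.continuous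

lemma tsum_conj2 {f : ℕ × ℕ → Mat} (hf : Summable f) (c : ℂ) (M N R : Mat) :
    ∑' p, c • (M * (f p * N) * R) = c • (M * ((∑' p, f p) * N) * R) := by
  let φ : Mat →L[ℂ] Mat := LinearMap.toContinuousLinearMap
    (c • ((LinearMap.mulRight ℂ R).comp ((LinearMap.mulLeft ℂ M).comp
      (LinearMap.mulRight ℂ N))))
  exact (φ.map_tsum hf).symm

lemma appellF3_eq_tsum (A A' B B' C : Mat) (x y : ℂ) :
    appellF3 A A' B B' C x y = ∑' p : ℕ × ℕ, f3term A A' B B' C x y p := rfl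

set_option maxHeartbeats 1000000 in
theorem appellF3_recursion_C' (A A' B B' C : Mat) (x y : ℂ) (s : ℕ)
    (hAA' : A * A' = A' * A) (hAB : A * B = B * A) (hA'B : A' * B = B * A')
    (hB'C : B' * C = C * B')
    (hC : ∀ n : ℕ, IsUnit (C + (n : ℂ) • (1 : Mat)))
    (hCs : ∀ k : ℕ, 1 ≤ k → k ≤ s → IsUnit (C - (k : ℂ) • (1 : Mat)))
    (hx : ‖x‖ < 1) (hy : ‖y‖ < 1) :
    appellF3 A A' B B' (C - (s : ℂ) • 1) x y =
      appellF3 A A' B B' C x y +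
        x • (A * B * ∑ k ∈ Finset.Icc 1 s,
          appellF3 (A + 1) A' (B + 1) B' (C + ((2 : ℂ) - (k : ℂ)) • 1) x y *
            (C - (k : ℂ) • 1)⁻¹ * (C - ((k : ℂ) - 1) • 1)⁻¹) +
        y • (A' * (∑ k ∈ Finset.Icc 1 s,
          appellF3 A (A' + 1) B (B' + 1) (C + ((2 : ℂ) - (k : ℂ)) • 1) x y *
            (C - (k : ℂ) • 1)⁻¹ * (C - ((k : ℂ) - 1) • 1)⁻¹) * B') := by
  classical
  have hx' : ‖x‖ < 1 := by exact hx
  have hy' : ‖y‖ < 1 := by exact hy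
  have hUz : ∀ j : ℕ, j ≤ s → ∀ i : ℕ, IsUnit (C - (j:ℂ) • 1 + (i:ℂ) • 1) := by
    intro j hj i
    rcases le_or_gt j i with h | h
    · have e : C - (j:ℂ) • 1 + (i:ℂ) • 1 = C + (((i - j : ℕ)):ℂ) • (1:Mat) := by
        rw [Nat.cast_sub h]; module
      rw [e]; exact hC _
    · have e : C - (j:ℂ) • 1 + (i:ℂ) • 1 = C - (((j - i : ℕ)):ℂ) • (1:Mat) := by
        rw [Nat.cast_sub h.le]; module
      rw [e]; exact hCs _ (by omega) (by omega)
  have hpt : ∀ p : ℕ × ℕ, f3term A A' B B' (C - (s:ℂ) • 1) x y p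
      = f3term A A' B B' C x y p + ∑ j ∈ Finset.Icc 1 s, gterm A A' B B' C x y j p :=
    fun p => f3term_telescope A A' B B' C x y s hUz p
  have hF0 : Summable (f3term A A' B B' C x y) := f3_summable A A' B B' C x y hC hx' hy'
  have hjfact : ∀ j : ℕ, 1 ≤ j → j ≤ s → Summable (gterm A A' B B' C x y j) ∧
      ∑' p, gterm A A' B B' C x y j p
        = x • (A * B * (appellF3 (A+1) A' (B+1) B' (C + ((2:ℂ) - (j:ℂ)) • 1) x y *
            (C - (j:ℂ) • 1)⁻¹ * (C - ((j:ℂ) - 1) • 1)⁻¹))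
          + y • (A' * (appellF3 A (A'+1) B (B'+1) (C + ((2:ℂ) - (j:ℂ)) • 1) x y *
            (C - (j:ℂ) • 1)⁻¹ * (C - ((j:ℂ) - 1) • 1)⁻¹) * B') := by
    intro j hj1 hjs
    set D : Mat := C - ((j:ℂ) - 1) • 1 with hDdef
    set E : Mat := (C - (j:ℂ) • 1)⁻¹ with hEdef
    have hcast : ((j:ℂ) - 1) = ((j - 1 : ℕ) : ℂ) := by
      rw [Nat.cast_sub hj1]; push_cast; ring
    have hDu : ∀ i : ℕ, IsUnit (D + (i:ℂ) • 1) := by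
      intro i; rw [hDdef, hcast]; exact hUz (j-1) (le_trans (Nat.sub_le j 1) hjs) i
    have hDunit : IsUnit D := by
      have h0 := hDu 0
      simpa using h0
    have hEunit : IsUnit (C - (j:ℂ) • 1) := hCs j hj1 hjs
    have hD1 : D + 1 = C + ((2:ℂ) - (j:ℂ)) • 1 := by
      rw [hDdef, one_eq_one_smul]; module
    have hD1u : ∀ i : ℕ, IsUnit ((D + 1) + (i:ℂ) • 1) := by
      intro i
      have e : (D + 1) + (i:ℂ) • 1 = D + (((i+1 : ℕ)):ℂ) • (1:Mat) := by
        push_cast; rw [one_eq_one_smul]; module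
      rw [e]; exact hDu (i+1)
    have hF1 : Summable (f3term (A+1) A' (B+1) B' (D+1) x y) :=
      f3_summable _ _ _ _ _ x y hD1u hx' hy'
    have hF2 : Summable (f3term A (A'+1) B (B'+1) (D+1) x y) :=
      f3_summable _ _ _ _ _ x y hD1u hx' hy'
    have hBA : Commute B A := hAB.symm
    have hBA' : Commute B A' := hA'B.symm
    have hA'A : Commute A' A := hAA'.symm
    have hB'Cc : Commute B' C := hB'C
    have hB'D : Commute B' D := by
      have e : D = C + (-((j:ℂ) - 1)) • 1 := by rw [hDdef, one_eq_one_smul]; module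
      rw [e]; exact commute_add_smul hB'Cc _
    have hB'D1 : Commute B' (D + 1) := hB'D.add_right (Commute.one_right B')
    have hB'Dinv : Commute B' D⁻¹ := commute_nonsing_inv hB'D hDunit
    have hCjc : Commute B' (C - (j:ℂ) • 1) := by
      have e : C - (j:ℂ) • 1 = C + (-(j:ℂ)) • 1 := by rw [one_eq_one_smul]; module
      rw [e]; exact commute_add_smul hB'Cc _
    have hB'E : Commute B' E := commute_nonsing_inv hCjc hEunit
    have hDEc : D⁻¹ * E = E * D⁻¹ := by
      have h0 : Commute D (C - (j:ℂ) • 1) := by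
        have e1 : D = C + (-((j:ℂ)-1)) • 1 := by rw [hDdef, one_eq_one_smul]; module
        have e2 : C - (j:ℂ) • 1 = C + (-(j:ℂ)) • 1 := by rw [one_eq_one_smul]; module
        rw [e1, e2]
        exact commute_add_smul ((commute_add_smul (Commute.refl C) _).symm) _
      have h1 : Commute D⁻¹ (C - (j:ℂ) • 1) := (commute_nonsing_inv h0.symm hDunit).symm
      exact commute_nonsing_inv h1 hEunit
    -- the u part
    have hιinj : Function.Injective (fun p : ℕ × ℕ => (p.1 + 1, p.2)) := by
      rintro ⟨a,b⟩ ⟨c,d⟩ h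
      simp only [Prod.mk.injEq] at h
      exact Prod.ext (by omega) h.2
    have hu_comp : (uterm A A' B B' D E x y) ∘ (fun p : ℕ × ℕ => (p.1 + 1, p.2))
        = fun p => x • (A * B * (f3term (A+1) A' (B+1) B' (D+1) x y p * (D⁻¹ * E))) := by
      funext p
      obtain ⟨m, n⟩ := p
      exact f3term_shift1 A A' B B' D E x y m n hBA hBA'
    have hu_supp : Function.support (uterm A A' B B' D E x y)
        ⊆ Set.range (fun p : ℕ × ℕ => (p.1 + 1, p.2)) := by
      intro p hp
      obtain ⟨m, n⟩ := p
      cases m with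
      | zero =>
          exact absurd (by show ((0:ℕ):ℂ) • _ = 0; simp) hp
      | succ m => exact ⟨(m, n), rfl⟩
    have hu_zero : ∀ p ∉ Set.range (fun p : ℕ × ℕ => (p.1 + 1, p.2)),
        uterm A A' B B' D E x y p = 0 := by
      intro p hp
      by_contra h
      exact hp (hu_supp h)
    have hu_s : Summable (uterm A A' B B' D E x y) := by
      refine (Function.Injective.summable_iff hιinj hu_zero).mp ?_
      rw [hu_comp]
      exact summable_conj hF1 x (A*B) (D⁻¹*E)
    have hu_t : ∑' p, uterm A A' B B' D E x y p
        = x • (A * B * (appellF3 (A+1) A' (B+1) B' (D+1) x y * E * D⁻¹)) := by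
      rw [← Function.Injective.tsum_eq hιinj hu_supp]
      have e1 : ∑' p : ℕ × ℕ, uterm A A' B B' D E x y ((fun p : ℕ × ℕ => (p.1 + 1, p.2)) p)
          = ∑' p : ℕ × ℕ, x • (A * B * (f3term (A+1) A' (B+1) B' (D+1) x y p * (D⁻¹ * E))) :=
        tsum_congr fun p => congrFun hu_comp p
      rw [e1, tsum_conj hF1, ← appellF3_eq_tsum, hDEc]
      congr 1
      noncomm_ring
    -- the v part
    have hκinj : Function.Injective (fun p : ℕ × ℕ => (p.1, p.2 + 1)) := by
      rintro ⟨a,b⟩ ⟨c,d⟩ h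
      simp only [Prod.mk.injEq] at h
      exact Prod.ext h.1 (by omega)
    have hv_comp : (vterm A A' B B' D E x y) ∘ (fun p : ℕ × ℕ => (p.1, p.2 + 1))
        = fun p => y • (A' * (f3term A (A'+1) B (B'+1) (D+1) x y p * (D⁻¹ * E)) * B') := by
      funext p
      obtain ⟨m, n⟩ := p
      exact f3term_shift2 A A' B B' D E x y m n hA'A
        (commute_nonsing_inv (commute_mPoch hB'D1 (m+n)) (mPoch_isUnit (fun i _ => hD1u i)))
        hB'Dinv hB'E
    have hv_supp : Function.support (vterm A A' B B' D E x y)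
        ⊆ Set.range (fun p : ℕ × ℕ => (p.1, p.2 + 1)) := by
      intro p hp
      obtain ⟨m, n⟩ := p
      cases n with
      | zero =>
          exact absurd (by show ((0:ℕ):ℂ) • _ = 0; simp) hp
      | succ n => exact ⟨(m, n), rfl⟩
    have hv_zero : ∀ p ∉ Set.range (fun p : ℕ × ℕ => (p.1, p.2 + 1)),
        vterm A A' B B' D E x y p = 0 := by
      intro p hp
      by_contra h
      exact hp (hv_supp h)
    have hv_s : Summable (vterm A A' B B' D E x y) := by
      refine (Function.Injective.summable_iff hκinj hv_zero).mp ?_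
      rw [hv_comp]
      exact summable_conj2 hF2 y A' (D⁻¹*E) B'
    have hv_t : ∑' p, vterm A A' B B' D E x y p
        = y • (A' * (appellF3 A (A'+1) B (B'+1) (D+1) x y * E * D⁻¹) * B') := by
      rw [← Function.Injective.tsum_eq hκinj hv_supp]
      have e1 : ∑' p : ℕ × ℕ, vterm A A' B B' D E x y ((fun p : ℕ × ℕ => (p.1, p.2 + 1)) p)
          = ∑' p : ℕ × ℕ, y • (A' * (f3term A (A'+1) B (B'+1) (D+1) x y p * (D⁻¹ * E)) * B') :=
        tsum_congr fun p => congrFun hv_comp p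
      rw [e1, tsum_conj2 hF2, ← appellF3_eq_tsum, hDEc]
      congr 1
      noncomm_ring
    have hg_eq : gterm A A' B B' C x y j
        = fun p => uterm A A' B B' D E x y p + vterm A A' B B' D E x y p :=
      funext fun p => gterm_eq_add A A' B B' C x y j p
    constructor
    · rw [hg_eq]; exact hu_s.add hv_s
    · rw [hg_eq]
      rw [Summable.tsum_add hu_s hv_s, hu_t, hv_t, hD1]
  have hgsum : ∀ j ∈ Finset.Icc 1 s, Summable (gterm A A' B B' C x y j) := fun j hj =>
    (hjfact j (Finset.mem_Icc.mp hj).1 (Finset.mem_Icc.mp hj).2).1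
  calc appellF3 A A' B B' (C - (s:ℂ) • 1) x y
      = ∑' p, f3term A A' B B' (C - (s:ℂ) • 1) x y p :=
        appellF3_eq_tsum A A' B B' (C - (s:ℂ) • 1) x y
  _ = ∑' p, (f3term A A' B B' C x y p + ∑ j ∈ Finset.Icc 1 s, gterm A A' B B' C x y j p) :=
        tsum_congr hpt
  _ = (∑' p, f3term A A' B B' C x y p)
        + ∑' p, ∑ j ∈ Finset.Icc 1 s, gterm A A' B B' C x y j p :=
        Summable.tsum_add hF0 (summable_sum hgsum)
  _ = appellF3 A A' B B' C x y + ∑ j ∈ Finset.Icc 1 s, ∑' p, gterm A A' B B' C x y j p := by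
        rw [← appellF3_eq_tsum, Summable.tsum_finsetSum hgsum]
  _ = appellF3 A A' B B' C x y + ∑ j ∈ Finset.Icc 1 s,
        (x • (A * B * (appellF3 (A+1) A' (B+1) B' (C + ((2:ℂ) - (j:ℂ)) • 1) x y *
            (C - (j:ℂ) • 1)⁻¹ * (C - ((j:ℂ) - 1) • 1)⁻¹))
          + y • (A' * (appellF3 A (A'+1) B (B'+1) (C + ((2:ℂ) - (j:ℂ)) • 1) x y *
            (C - (j:ℂ) • 1)⁻¹ * (C - ((j:ℂ) - 1) • 1)⁻¹) * B')) := by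
        refine congrArg _ (Finset.sum_congr rfl fun j hj => ?_)
        exact (hjfact j (Finset.mem_Icc.mp hj).1 (Finset.mem_Icc.mp hj).2).2
  _ = _ := by
        rw [Finset.sum_add_distrib, ← add_assoc]
        congr 1
        · congr 1
          rw [← Finset.smul_sum, ← Finset.mul_sum]
        · rw [← Finset.smul_sum, ← Finset.sum_mul, ← Finset.mul_sum]

end Summability
end Aux

theorem appellF3_recursion_C {r : ℕ} (A A' B B' C : Matrix (Fin r) (Fin r) ℂ) (x y : ℂ) (s : ℕ)
    (hAA' : A * A' = A' * A) (hAB : A * B = B * A) (hA'B : A' * B = B * A')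
    (hB'C : B' * C = C * B')
    (hC : ∀ n : ℕ, IsUnit (C + (n : ℂ) • (1 : Matrix (Fin r) (Fin r) ℂ)))
    (hCs : ∀ k : ℕ, 1 ≤ k → k ≤ s → IsUnit (C - (k : ℂ) • (1 : Matrix (Fin r) (Fin r) ℂ)))
    (hx : ‖x‖ < 1) (hy : ‖y‖ < 1) :
    appellF3 A A' B B' (C - (s : ℂ) • 1) x y =
      appellF3 A A' B B' C x y +
        x • (A * B * ∑ k ∈ Finset.Icc 1 s,
          appellF3 (A + 1) A' (B + 1) B' (C + ((2 : ℂ) - (k : ℂ)) • 1) x y *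
            (C - (k : ℂ) • 1)⁻¹ * (C - ((k : ℂ) - 1) • 1)⁻¹) +
        y • (A' * (∑ k ∈ Finset.Icc 1 s,
          appellF3 A (A' + 1) B (B' + 1) (C + ((2 : ℂ) - (k : ℂ)) • 1) x y *
            (C - (k : ℂ) • 1)⁻¹ * (C - ((k : ℂ) - 1) • 1)⁻¹) * B') :=
  appellF3_recursion_C' A A' B B' C x y s hAA' hAB hA'B hB'C hC hCs hx hy
end
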